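/- (Bonnet–Myers for oriented hypergraphs) Let H_o be a weighted oriented hypergraph. If a hyperedge h has LLY curvature κ(h) > 0, then L(h) ≤ 2 max_{h'∈H} w_{h'} / κ(h). Moreover, if κ(u,v) ≥ κ > 0 for every hyperedge h and all u ∈ A_h, v ∈ B_h, then diam(H_o) ≤ 2 max_{h'∈H} w_{h'} / κ. -/

import Mathlib

open Finset Filter Topology

variable {V : Type*} [Fintype V] [DecidableEq V]

/-- A finite weighted directed hypergraph: each hyperedge is an ordered pair
`(A_h, B_h)` of nonempty vertex sets, with a positive weight. -/
structure DHyp (V : Type*) [Fintype V] [DecidableEq V] where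
  E : Finset (Finset V × Finset V)
  w : Finset V × Finset V → ℝ
  pos : ∀ h ∈ E, 0 < w h
  nonempA : ∀ h ∈ E, h.1.Nonempty
  nonempB : ∀ h ∈ E, h.2.Nonempty

/-- `γ` is a directed path from `u` to `v`. -/
def IsDipath (G : DHyp V) (γ : List (Finset V × Finset V)) (u v : V) : Prop :=
  γ ≠ [] ∧ (∀ h ∈ γ, h ∈ G.E) ∧
  (∀ h0, γ.head? = some h0 → u ∈ h0.1) ∧
  (∀ hl, γ.getLast? = some hl → v ∈ hl.2) ∧
  List.Chain' (fun a b => (a.2 ∩ b.1).Nonempty) γ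

/-- Weighted quasi-distance. -/
noncomputable def ddist (G : DHyp V) (u v : V) : ℝ :=
  if u = v then 0 else sInf {s | ∃ γ, IsDipath G γ u v ∧ s = (γ.map G.w).sum}

/-- Strong connectivity: every ordered pair of distinct vertices is joined
by a directed path. -/
def StronglyConnected (G : DHyp V) : Prop :=
  ∀ u v : V, u ≠ v → ∃ γ, IsDipath G γ u v

/-- Looplessness: inputs and outputs of each hyperedge are disjoint. -/
def Loopless (G : DHyp V) : Prop := ∀ h ∈ G.E, h.1 ∩ h.2 = ∅

open Classical in
/-- In-neighborhood `Γ^{in}(x)`. -/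
noncomputable def GammaIn (G : DHyp V) (x : V) : Finset V :=
  Finset.univ.filter (fun z => ∃ h ∈ G.E, x ∈ h.2 ∧ z ∈ h.1)

open Classical in
/-- Out-neighborhood `Γ^{out}(x)`. -/
noncomputable def GammaOut (G : DHyp V) (x : V) : Finset V :=
  Finset.univ.filter (fun z => ∃ h ∈ G.E, x ∈ h.1 ∧ z ∈ h.2)

/-- In-degree: number of hyperedges having `x` as an output. -/
def degIn (G : DHyp V) (x : V) : ℕ := (G.E.filter (fun h => x ∈ h.2)).card

/-- Out-degree: number of hyperedges having `x` as an input. -/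
def degOut (G : DHyp V) (x : V) : ℕ := (G.E.filter (fun h => x ∈ h.1)).card

/-- In-measure `μ^α_{x}` of a vertex `x ∈ A_h`, where `n = |A_h|`. -/
noncomputable def muIn (G : DHyp V) (α : ℝ) (n : ℕ) (x z : V) : ℝ :=
  if z = x then α / n
  else if z ∈ GammaIn G x then
    (1 - α) * ∑ h ∈ G.E.filter (fun h => x ∈ h.2 ∧ z ∈ h.1),
      (1 / ((n : ℝ) * h.1.card)) *
        (G.w h / ∑ h' ∈ G.E.filter (fun h'' => x ∈ h''.2), G.w h')
  else 0

/-- Out-measure `μ^α_{y}` of a vertex `y ∈ B_h`, where `m = |B_h|`. -/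
noncomputable def muOut (G : DHyp V) (α : ℝ) (m : ℕ) (y z : V) : ℝ :=
  if z = y then α / m
  else if z ∈ GammaOut G y then
    (1 - α) * ∑ h ∈ G.E.filter (fun h => y ∈ h.1 ∧ z ∈ h.2),
      (1 / ((m : ℝ) * h.2.card)) *
        (G.w h / ∑ h' ∈ G.E.filter (fun h'' => y ∈ h''.1), G.w h')
  else 0

/-- The measure `μ^α_{A_h}`. -/
noncomputable def muA (G : DHyp V) (α : ℝ) (h : Finset V × Finset V) : V → ℝ :=
  fun z => ∑ x ∈ h.1, muIn G α h.1.card x z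

/-- The measure `μ^α_{B_h}`. -/
noncomputable def muB (G : DHyp V) (α : ℝ) (h : Finset V × Finset V) : V → ℝ :=
  fun z => ∑ y ∈ h.2, muOut G α h.2.card y z

/-- `π` is a coupling of `μ` and `ν`. -/
def IsCoupling (μ ν : V → ℝ) (π : V → V → ℝ) : Prop :=
  (∀ u v, 0 ≤ π u v) ∧ (∀ u, ∑ v, π u v = μ u) ∧ (∀ v, ∑ u, π u v = ν v)

/-- The 1-Wasserstein functional associated to a cost `d`. -/
noncomputable def Wd (d : V → V → ℝ) (μ ν : V → ℝ) : ℝ :=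
  sInf {s | ∃ π, IsCoupling μ ν π ∧ s = ∑ u, ∑ v, π u v * d u v}

/-- Length of a directed hyperedge: `L(h) = min_{x∈A_h, y∈B_h} d(x,y)`. -/
noncomputable def Ldi (G : DHyp V) (h : Finset V × Finset V) : ℝ :=
  sInf {s | ∃ x ∈ h.1, ∃ y ∈ h.2, s = ddist G x y}

/-- Ollivier–Ricci curvature `κ_α(h)` of a directed hyperedge. -/
noncomputable def kappaDE (G : DHyp V) (α : ℝ) (h : Finset V × Finset V) : ℝ :=
  1 - Wd (ddist G) (muA G α h) (muB G α h) / Ldi G h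

/-- Single-vertex in-measure `μ^α_{u^{in}}`. -/
noncomputable def muInPt (G : DHyp V) (α : ℝ) (u z : V) : ℝ :=
  if z = u then α
  else if z ∈ GammaIn G u then
    (1 - α) * ∑ h ∈ G.E.filter (fun h => u ∈ h.2 ∧ z ∈ h.1),
      (1 / (h.1.card : ℝ)) * (G.w h / ∑ h' ∈ G.E.filter (fun h'' => u ∈ h''.2), G.w h')
  else 0

/-- Single-vertex out-measure `μ^α_{v^{out}}`. -/
noncomputable def muOutPt (G : DHyp V) (α : ℝ) (v z : V) : ℝ :=
  if z = v then α
  else if z ∈ GammaOut G v then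
    (1 - α) * ∑ h ∈ G.E.filter (fun h => v ∈ h.1 ∧ z ∈ h.2),
      (1 / (h.2.card : ℝ)) * (G.w h / ∑ h' ∈ G.E.filter (fun h'' => v ∈ h''.1), G.w h')
  else 0

/-- Ollivier–Ricci curvature `κ_α(u,v)` between two vertices. -/
noncomputable def kappaDV (G : DHyp V) (α : ℝ) (u v : V) : ℝ :=
  1 - Wd (ddist G) (muInPt G α u) (muOutPt G α v) / ddist G u v

/-- Maximal hyperedge weight. -/
noncomputable def maxWd (G : DHyp V) : ℝ := sSup {x | ∃ h ∈ G.E, x = G.w h}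

/-- Diameter of a directed hypergraph. -/
noncomputable def diamD (G : DHyp V) : ℝ := sSup {s | ∃ u v : V, s = ddist G u v}

/-- An oriented hypergraph: inputs and outputs are disjoint, the reversal of each
hyperedge is a hyperedge, and weights are reversal-symmetric. -/
def Oriented (G : DHyp V) : Prop :=
  ∀ h ∈ G.E, h.1 ∩ h.2 = ∅ ∧ (h.2, h.1) ∈ G.E ∧ G.w (h.2, h.1) = G.w h

/-- `B_H = max_h |B_h|`. -/
def BH (G : DHyp V) : ℕ := G.E.sup (fun h => h.2.card)

/-- `A_H = max_h |A_h|`. -/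
def AH (G : DHyp V) : ℕ := G.E.sup (fun h => h.1.card)

section BasicLemmas
variable {V : Type*} [Fintype V] [DecidableEq V] (G : DHyp V)

lemma path_sum_nonneg {γ : List (Finset V × Finset V)} (hγ : ∀ h ∈ γ, h ∈ G.E) :
    0 ≤ (γ.map G.w).sum := by
  induction γ with
  | nil => simp
  | cons a l ih =>
    simp only [List.map_cons, List.sum_cons]
    have h1 := G.pos a (hγ a (by simp))
    have h2 := ih (fun h hh => hγ h (by simp [hh]))
    linarith

lemma ddist_self (u : V) : ddist G u u = 0 := by simp [ddist]

lemma ddist_nonneg' (u v : V) : 0 ≤ ddist G u v := by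
  unfold ddist
  split
  · exact le_refl 0
  · exact Real.sInf_nonneg (by rintro s ⟨γ, hγ, rfl⟩; exact path_sum_nonneg G hγ.2.1)

lemma ddist_bddBelow (u v : V) :
    BddBelow {s | ∃ γ, IsDipath G γ u v ∧ s = (γ.map G.w).sum} :=
  ⟨0, by rintro s ⟨γ, hγ, rfl⟩; exact path_sum_nonneg G hγ.2.1⟩

lemma ddist_le_path {γ} {u v : V} (hγ : IsDipath G γ u v) :
    ddist G u v ≤ (γ.map G.w).sum := by
  unfold ddist
  split
  · exact path_sum_nonneg G hγ.2.1
  · exact csInf_le (ddist_bddBelow G u v) ⟨γ, hγ, rfl⟩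

lemma IsDipath.append {G : DHyp V} {γ1 γ2} {u w v : V}
    (h1 : IsDipath G γ1 u w) (h2 : IsDipath G γ2 w v) :
    IsDipath G (γ1 ++ γ2) u v := by
  obtain ⟨hne1, hmem1, hhd1, hlt1, hch1⟩ := h1
  obtain ⟨hne2, hmem2, hhd2, hlt2, hch2⟩ := h2
  refine ⟨by simp [hne1], ?_, ?_, ?_, ?_⟩
  · intro h hh; rcases List.mem_append.1 hh with h' | h'
    exacts [hmem1 _ h', hmem2 _ h']
  · intro h0 hh0
    apply hhd1
    rwa [List.head?_append_of_ne_nil _ hne1] at hh0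
  · intro hl hhl
    apply hlt2
    rwa [List.getLast?_append_of_ne_nil _ hne2] at hhl
  · refine List.isChain_append.2 ?_
    refine ⟨hch1, hch2, ?_⟩
    intro x hx y hy
    refine ⟨w, Finset.mem_inter.2 ⟨hlt1 x hx, hhd2 y hy⟩⟩

lemma ddist_triangle (hsc : StronglyConnected G) (u w v : V) :
    ddist G u v ≤ ddist G u w + ddist G w v := by
  by_cases huv : u = v
  · subst huv; rw [ddist_self]; exact add_nonneg (ddist_nonneg' _ _ _) (ddist_nonneg' _ _ _)
  by_cases huw : u = w
  · subst huw; rw [ddist_self, zero_add]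
  by_cases hwv : w = v
  · subst hwv; rw [ddist_self, add_zero]
  obtain ⟨γ1, hγ1⟩ := hsc u w huw
  obtain ⟨γ2, hγ2⟩ := hsc w v hwv
  have key : ∀ s1 ∈ {s | ∃ γ, IsDipath G γ u w ∧ s = (γ.map G.w).sum},
      ∀ s2 ∈ {s | ∃ γ, IsDipath G γ w v ∧ s = (γ.map G.w).sum},
      ddist G u v ≤ s1 + s2 := by
    rintro s1 ⟨δ1, hδ1, rfl⟩ s2 ⟨δ2, hδ2, rfl⟩
    have := ddist_le_path G (hδ1.append hδ2)
    rwa [List.map_append, List.sum_append] at this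
  have h1 : ddist G u v - ddist G w v ≤ ddist G u w := by
    rw [show ddist G u w = sInf {s | ∃ γ, IsDipath G γ u w ∧ s = (γ.map G.w).sum} by
      unfold ddist; rw [if_neg huw]]
    refine le_csInf ⟨_, ⟨γ1, hγ1, rfl⟩⟩ ?_
    intro s1 hs1
    rw [sub_le_iff_le_add, add_comm, ← sub_le_iff_le_add]
    rw [show ddist G w v = sInf {s | ∃ γ, IsDipath G γ w v ∧ s = (γ.map G.w).sum} by
      unfold ddist; rw [if_neg hwv]]
    refine le_csInf ⟨_, ⟨γ2, hγ2, rfl⟩⟩ ?_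
    intro s2 hs2
    have := key s1 hs1 s2 hs2
    linarith
  linarith

end BasicLemmas
section Attain
variable {V : Type*} [Fintype V] [DecidableEq V] (G : DHyp V)

lemma gl_cons {α : Type*} {a : α} {t : List α} (h : t ≠ []) :
    (a :: t).getLast? = t.getLast? := by
  match t, h with
  | b :: t', _ => simp

lemma sublist_sum_le {γ' γ : List (Finset V × Finset V)} (hs : γ'.Sublist γ)
    (hγ : ∀ h ∈ γ, h ∈ G.E) : (γ'.map G.w).sum ≤ (γ.map G.w).sum := by
  refine List.Sublist.sum_le_sum (hs.map G.w) ?_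
  intro x hx
  obtain ⟨a, ha, rfl⟩ := List.mem_map.1 hx
  exact (G.pos a (hγ a ha)).le

lemma dedup_path : ∀ n (γ : List (Finset V × Finset V)), γ.length ≤ n → ∀ u v : V,
    IsDipath G γ u v → ∃ γ', IsDipath G γ' u v ∧ γ'.Nodup ∧ γ'.Sublist γ := by
  intro n
  induction n with
  | zero => intro γ hlen u v hγ; exact absurd (List.length_eq_zero_iff.1 (Nat.le_zero.1 hlen)) hγ.1
  | succ n ih =>
    intro γ hlen u v hγ
    obtain ⟨hne, hmem, hhd, hlt, hch⟩ := hγ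
    match γ, hne with
    | h :: t, _ =>
      by_cases hht : h ∈ t
      · obtain ⟨t1, t2, rfl⟩ := List.append_of_mem hht
        have hsplit : h :: (t1 ++ h :: t2) = (h :: t1) ++ (h :: t2) := by simp
        have hlen2 : (h :: t2).length ≤ n := by
          simp only [List.length_cons, List.length_append] at hlen ⊢
          omega
        have hdp2 : IsDipath G (h :: t2) u v := by
          refine ⟨by simp, ?_, ?_, ?_, ?_⟩
          · intro x hx
            apply hmem
            rcases List.mem_cons.1 hx with h' | h' <;> simp [h']
          · intro h0 hh0
            exact hhd h0 (by simpa using (by simpa using hh0))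
          · intro hl hhl
            apply hlt
            rw [hsplit, List.getLast?_append_of_ne_nil _ (by simp)]
            exact hhl
          · have hch2 : List.Chain' (fun a b => ((a.2 : Finset V) ∩ b.1).Nonempty)
                ((h :: t1) ++ (h :: t2)) := by rw [← hsplit]; exact hch
            exact (List.isChain_append.1 hch2).2.1
        obtain ⟨γ', h1, h2, h3⟩ := ih (h :: t2) hlen2 u v hdp2
        refine ⟨γ', h1, h2, h3.trans ?_⟩
        rw [hsplit]
        exact (List.suffix_append (h :: t1) (h :: t2)).sublist
      · rcases List.eq_nil_or_concat t with rfl | _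
        · exact ⟨[h], ⟨by simp, hmem, hhd, hlt, hch⟩, by simp, by simp⟩
        · have htne : t ≠ [] := by
            rintro rfl; simp_all
          obtain ⟨h2, hh2⟩ := List.isSome_head?.2 htne |> Option.isSome_iff_exists.1
          have hlink : (h.2 ∩ h2.1).Nonempty := by
            have := List.isChain_cons.1 (by exact hch)
            exact this.1 h2 hh2
          obtain ⟨y, hy⟩ := hlink
          have hy1 : y ∈ h.2 := (Finset.mem_inter.1 hy).1
          have hy2 : y ∈ h2.1 := (Finset.mem_inter.1 hy).2
          have hdpt : IsDipath G t y v := by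
            refine ⟨htne, fun x hx => hmem x (by simp [hx]), ?_, ?_, (List.isChain_cons.1 hch).2⟩
            · intro h0 hh0
              rw [hh2] at hh0
              cases hh0
              exact hy2
            · intro hl hhl
              apply hlt
              rw [gl_cons htne]
              exact hhl
          obtain ⟨t', ht1, ht2, ht3⟩ := ih t (by simp only [List.length_cons] at hlen; omega) y v hdpt
          have ht'ne : t' ≠ [] := ht1.1
          obtain ⟨h2', hh2'⟩ := List.isSome_head?.2 ht'ne |> Option.isSome_iff_exists.1
          refine ⟨h :: t', ⟨by simp, ?_, ?_, ?_, ?_⟩, ?_, List.cons_sublist_cons.2 ht3⟩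
          · intro x hx
            rcases List.mem_cons.1 hx with h' | h'
            · exact hmem x (by simp [h'])
            · exact ht1.2.1 x h'
          · intro h0 hh0
            simp only [List.head?_cons, Option.some.injEq] at hh0
            subst hh0
            exact hhd _ rfl
          · intro hl hhl
            apply ht1.2.2.2.1
            rwa [gl_cons ht'ne] at hhl
          · refine List.isChain_cons.2 ?_
            refine ⟨?_, ht1.2.2.2.2⟩
            intro z hz
            rw [hh2'] at hz
            cases hz
            exact ⟨y, Finset.mem_inter.2 ⟨hy1, ht1.2.2.1 h2' hh2'⟩⟩
          · exact List.nodup_cons.2 ⟨fun hc => hht (ht3.mem hc), ht2⟩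
end Attain
section Attain2
variable {V : Type*} [Fintype V] [DecidableEq V] (G : DHyp V)

lemma ddist_exists_path {u v : V} (huv : u ≠ v) (hex : ∃ γ, IsDipath G γ u v) :
    ∃ γ, IsDipath G γ u v ∧ (γ.map G.w).sum = ddist G u v := by
  classical
  set T : Set ℝ := {s | ∃ γ, (IsDipath G γ u v ∧ γ.Nodup) ∧ s = (γ.map G.w).sum} with hT
  have hTfin : T.Finite := by
    apply Set.Finite.subset (Set.finite_range
      (fun l : {l : List (Finset V × Finset V) // l.Nodup} => ((l : List _).map G.w).sum))
    rintro s ⟨γ, ⟨_, hnd⟩, rfl⟩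
    exact ⟨⟨γ, hnd⟩, rfl⟩
  have hTne : T.Nonempty := by
    obtain ⟨γ, hγ⟩ := hex
    obtain ⟨γ', h1, h2, _⟩ := dedup_path G γ.length γ le_rfl u v hγ
    exact ⟨_, ⟨γ', ⟨h1, h2⟩, rfl⟩⟩
  obtain ⟨m, hmT, hmin⟩ := Set.exists_min_image T id hTfin hTne
  obtain ⟨γm, ⟨hγm, _⟩, rfl⟩ := hmT
  refine ⟨γm, hγm, ?_⟩
  have hS : ddist G u v = sInf {s | ∃ γ, IsDipath G γ u v ∧ s = (γ.map G.w).sum} := by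
    unfold ddist; rw [if_neg huv]
  rw [hS]
  apply le_antisymm
  · refine le_csInf ⟨_, ⟨γm, hγm, rfl⟩⟩ ?_
    rintro s ⟨γ, hγ, rfl⟩
    obtain ⟨γ', h1, h2, h3⟩ := dedup_path G γ.length γ le_rfl u v hγ
    calc (γm.map G.w).sum ≤ (γ'.map G.w).sum := hmin _ ⟨γ', ⟨h1, h2⟩, rfl⟩
    _ ≤ (γ.map G.w).sum := sublist_sum_le G h3 hγ.2.1
  · exact csInf_le (ddist_bddBelow G u v) ⟨γm, hγm, rfl⟩

lemma wmin_pos (hEne : G.E.Nonempty) : 0 < (G.E.image G.w).min' (hEne.image _) := by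
  obtain ⟨x, hx⟩ := Finset.mem_image.1 (Finset.min'_mem (G.E.image G.w) (hEne.image _))
  rw [← hx.2]
  exact G.pos _ hx.1

lemma path_sum_ge_wmin {γ : List (Finset V × Finset V)} {u v : V} (hγ : IsDipath G γ u v)
    (hEne : G.E.Nonempty) : (G.E.image G.w).min' (hEne.image _) ≤ (γ.map G.w).sum := by
  obtain ⟨hne, hmem, -, -, -⟩ := hγ
  match γ, hne with
  | h :: t, _ =>
    simp only [List.map_cons, List.sum_cons]
    have h1 : (G.E.image G.w).min' (hEne.image _) ≤ G.w h :=
      Finset.min'_le _ _ (Finset.mem_image_of_mem _ (hmem h (by simp)))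
    have h2 : 0 ≤ (t.map G.w).sum := path_sum_nonneg G (fun x hx => hmem x (by simp [hx]))
    linarith

lemma ddist_pos_of_edgepair {u v : V} {h : Finset V × Finset V} (hE : h ∈ G.E)
    (hu : u ∈ h.1) (hv : v ∈ h.2) (hdisj : h.1 ∩ h.2 = ∅) :
    0 < ddist G u v ∧ ddist G u v ≤ G.w h := by
  have huv : u ≠ v := by
    rintro rfl
    have : u ∈ h.1 ∩ h.2 := Finset.mem_inter.2 ⟨hu, hv⟩
    simp [hdisj] at this
  have hpath : IsDipath G [h] u v := by
    refine ⟨by simp, by simpa using hE, ?_, ?_, List.isChain_singleton _⟩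
    · intro h0 hh0; simp only [List.head?_cons, Option.some.injEq] at hh0; subst hh0; exact hu
    · intro hl hhl; simp only [List.getLast?_singleton, Option.some.injEq] at hhl
      subst hhl; exact hv
  have hEne : G.E.Nonempty := ⟨h, hE⟩
  constructor
  · have : (G.E.image G.w).min' (hEne.image _) ≤ ddist G u v := by
      rw [show ddist G u v = sInf {s | ∃ γ, IsDipath G γ u v ∧ s = (γ.map G.w).sum} by
        unfold ddist; rw [if_neg huv]]
      refine le_csInf ⟨_, ⟨[h], hpath, rfl⟩⟩ ?_
      rintro s ⟨γ, hγ, rfl⟩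
      exact path_sum_ge_wmin G hγ hEne
    exact lt_of_lt_of_le (wmin_pos G hEne) this
  · have := ddist_le_path G hpath
    simpa using this

lemma ddist_le_w_of_edgepair {u v : V} {h : Finset V × Finset V} (hE : h ∈ G.E)
    (hu : u ∈ h.1) (hv : v ∈ h.2) : ddist G u v ≤ G.w h := by
  by_cases huv : u = v
  · subst huv; rw [ddist_self]; exact (G.pos h hE).le
  have hpath : IsDipath G [h] u v := by
    refine ⟨by simp, by simpa using hE, ?_, ?_, List.isChain_singleton _⟩
    · intro h0 hh0; simp only [List.head?_cons, Option.some.injEq] at hh0; subst hh0; exact hu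
    · intro hl hhl; simp only [List.getLast?_singleton, Option.some.injEq] at hhl
      subst hhl; exact hv
  simpa using ddist_le_path G hpath

lemma w_le_maxWd {h : Finset V × Finset V} (hE : h ∈ G.E) : G.w h ≤ maxWd G := by
  have hset : {x | ∃ h ∈ G.E, x = G.w h} = ↑(G.E.image G.w) := by
    ext x
    simp only [Set.mem_setOf_eq, Finset.coe_image, Set.mem_image, Finset.mem_coe]
    constructor
    · rintro ⟨h', hh', rfl⟩; exact ⟨h', hh', rfl⟩
    · rintro ⟨h', hh', rfl⟩; exact ⟨h', hh', rfl⟩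
  unfold maxWd
  rw [hset]
  exact le_csSup (Set.Finite.bddAbove (G.E.image G.w).finite_toSet)
    (by exact Finset.mem_coe.2 (Finset.mem_image_of_mem _ hE))

lemma maxWd_nonneg : 0 ≤ maxWd G := by
  rcases G.E.eq_empty_or_nonempty with hE | ⟨h, hE⟩
  · have : {x | ∃ h ∈ G.E, x = G.w h} = ∅ := by
      ext x; simp [hE]
    unfold maxWd
    rw [this, Real.sSup_empty]
  · exact le_trans (G.pos h hE).le (w_le_maxWd G hE)

end Attain2
section Wass
set_option linter.unusedSectionVars false
set_option linter.unusedVariables false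
variable {V : Type*} [Fintype V] [DecidableEq V]

lemma cost_nonneg {d : V → V → ℝ} (hd : ∀ a b, 0 ≤ d a b) {π : V → V → ℝ}
    (hπ : ∀ a b, 0 ≤ π a b) : 0 ≤ ∑ u, ∑ v, π u v * d u v := by
  refine Finset.sum_nonneg fun u _ => Finset.sum_nonneg fun v _ => mul_nonneg (hπ u v) (hd u v)

lemma wd_bddBelow {d : V → V → ℝ} (hd : ∀ a b, 0 ≤ d a b) (μ ν : V → ℝ) :
    BddBelow {s | ∃ π, IsCoupling μ ν π ∧ s = ∑ u, ∑ v, π u v * d u v} := by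
  refine ⟨0, ?_⟩
  rintro s ⟨π, hπ, rfl⟩
  exact cost_nonneg hd hπ.1

lemma wd_le_cost' {d : V → V → ℝ} (hd : ∀ a b, 0 ≤ d a b) {μ ν : V → ℝ} {π : V → V → ℝ}
    (hπ : IsCoupling μ ν π) : Wd d μ ν ≤ ∑ u, ∑ v, π u v * d u v :=
  csInf_le (wd_bddBelow hd μ ν) ⟨π, hπ, rfl⟩

lemma le_wd {d : V → V → ℝ} {μ ν : V → ℝ} {B : ℝ} (hex : ∃ π, IsCoupling μ ν π)
    (h : ∀ π, IsCoupling μ ν π → B ≤ ∑ u, ∑ v, π u v * d u v) : B ≤ Wd d μ ν := by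
  obtain ⟨π0, hπ0⟩ := hex
  exact le_csInf ⟨_, ⟨π0, hπ0, rfl⟩⟩ (by rintro s ⟨π, hπ, rfl⟩; exact h π hπ)

lemma prod_coupling {μ ν : V → ℝ} (hμ0 : ∀ z, 0 ≤ μ z) (hν0 : ∀ z, 0 ≤ ν z)
    (hμ1 : ∑ z, μ z = 1) (hν1 : ∑ z, ν z = 1) :
    IsCoupling μ ν (fun a b => μ a * ν b) := by
  refine ⟨fun a b => mul_nonneg (hμ0 a) (hν0 b), fun a => ?_, fun b => ?_⟩
  · rw [← Finset.mul_sum, hν1, mul_one]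
  · rw [← Finset.sum_mul, hμ1, one_mul]

lemma wd_ge_dual {d : V → V → ℝ} (hd : ∀ a b, 0 ≤ d a b) (f : V → ℝ)
    (hf : ∀ a b, f b - f a ≤ d a b) {μ ν : V → ℝ} (hex : ∃ π, IsCoupling μ ν π) :
    (∑ z, ν z * f z) - (∑ z, μ z * f z) ≤ Wd d μ ν := by
  refine le_wd hex ?_
  intro π hπ
  have key : ∑ u, ∑ v, π u v * (f v - f u) ≤ ∑ u, ∑ v, π u v * d u v := by
    refine Finset.sum_le_sum fun u _ => Finset.sum_le_sum fun v _ => ?_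
    exact mul_le_mul_of_nonneg_left (hf u v) (hπ.1 u v)
  refine le_trans (le_of_eq ?_) key
  have h1 : ∑ u, ∑ v, π u v * (f v - f u)
      = (∑ u, ∑ v, π u v * f v) - (∑ u, ∑ v, π u v * f u) := by
    rw [← Finset.sum_sub_distrib]
    refine Finset.sum_congr rfl fun u _ => ?_
    rw [← Finset.sum_sub_distrib]
    refine Finset.sum_congr rfl fun v _ => ?_
    ring
  rw [h1]
  congr 1
  · rw [Finset.sum_comm]
    refine Finset.sum_congr rfl fun v _ => ?_
    rw [← Finset.sum_mul, hπ.2.2 v]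
  · refine Finset.sum_congr rfl fun u _ => ?_
    rw [← Finset.sum_mul, hπ.2.1 u]

lemma coupling_zero_of_marginal_zero {μ ν : V → ℝ} {π : V → V → ℝ}
    (hπ : IsCoupling μ ν π) {x : V} (hx : ν x = 0) (a : V) : π a x = 0 := by
  have h0 : ∑ u, π u x = 0 := by rw [hπ.2.2 x, hx]
  have := (Finset.sum_eq_zero_iff_of_nonneg (fun u _ => hπ.1 u x)).1 h0
  exact this a (Finset.mem_univ a)

lemma glue_coupling {μ ρ ν : V → ℝ} {π1 π2 : V → V → ℝ}
    (h1 : IsCoupling μ ρ π1) (h2 : IsCoupling ρ ν π2) :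
    IsCoupling μ ν (fun a b => ∑ x, π1 a x * π2 x b / ρ x) := by
  have key1 : ∀ a x, π1 a x * ρ x / ρ x = π1 a x := by
    intro a x
    by_cases hx : ρ x = 0
    · rw [coupling_zero_of_marginal_zero h1 hx a]; simp
    · rw [mul_div_assoc, div_self hx, mul_one]
  have key2 : ∀ x b, ρ x * π2 x b / ρ x = π2 x b := by
    intro x b
    by_cases hx : ρ x = 0
    · have : π2 x b = 0 := by
        have h0 : ∑ w, π2 x w = 0 := by rw [h2.2.1 x, hx]
        exact (Finset.sum_eq_zero_iff_of_nonneg (fun w _ => h2.1 x w)).1 h0 b (Finset.mem_univ b)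
      rw [this]; simp
    · rw [mul_comm, mul_div_assoc, div_self hx, mul_one]
  refine ⟨fun a b => Finset.sum_nonneg fun x _ =>
      div_nonneg (mul_nonneg (h1.1 a x) (h2.1 x b)) ?_, fun a => ?_, fun b => ?_⟩
  · have : ρ x = ∑ u, π1 u x := (h1.2.2 x).symm
    rw [this]; exact Finset.sum_nonneg fun u _ => h1.1 u x
  · rw [Finset.sum_comm]
    calc ∑ x, ∑ b, π1 a x * π2 x b / ρ x
        = ∑ x, π1 a x * ρ x / ρ x := by
          refine Finset.sum_congr rfl fun x _ => ?_
          rw [← Finset.sum_div, ← Finset.mul_sum, h2.2.1 x]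
      _ = ∑ x, π1 a x := Finset.sum_congr rfl fun x _ => key1 a x
      _ = μ a := h1.2.1 a
  · rw [Finset.sum_comm]
    calc ∑ x, ∑ a, π1 a x * π2 x b / ρ x
        = ∑ x, ρ x * π2 x b / ρ x := by
          refine Finset.sum_congr rfl fun x _ => ?_
          rw [← Finset.sum_div, ← Finset.sum_mul, h1.2.2 x]
      _ = ∑ x, π2 x b := Finset.sum_congr rfl fun x _ => key2 x b
      _ = ν b := h2.2.2 b

lemma glue_cost {d : V → V → ℝ} (hd : ∀ a b, 0 ≤ d a b)
    (hdt : ∀ a b c, d a c ≤ d a b + d b c) {μ ρ ν : V → ℝ} {π1 π2 : V → V → ℝ}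
    (h1 : IsCoupling μ ρ π1) (h2 : IsCoupling ρ ν π2) :
    ∑ a, ∑ b, (∑ x, π1 a x * π2 x b / ρ x) * d a b
      ≤ (∑ a, ∑ b, π1 a b * d a b) + (∑ a, ∑ b, π2 a b * d a b) := by
  have hρ0 : ∀ x, 0 ≤ ρ x := by
    intro x
    rw [← h1.2.2 x]
    exact Finset.sum_nonneg fun u _ => h1.1 u x
  have step1 : ∑ a, ∑ b, (∑ x, π1 a x * π2 x b / ρ x) * d a b
      ≤ ∑ a, ∑ b, ∑ x, π1 a x * π2 x b / ρ x * (d a x + d x b) := by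
    refine Finset.sum_le_sum fun a _ => Finset.sum_le_sum fun b _ => ?_
    rw [Finset.sum_mul]
    refine Finset.sum_le_sum fun x _ => ?_
    exact mul_le_mul_of_nonneg_left (hdt a x b)
      (div_nonneg (mul_nonneg (h1.1 a x) (h2.1 x b)) (hρ0 x))
  refine step1.trans (le_of_eq ?_)
  have expand : ∀ a b x, π1 a x * π2 x b / ρ x * (d a x + d x b)
      = π1 a x * d a x * π2 x b / ρ x + π1 a x * (π2 x b * d x b) / ρ x := by
    intro a b x; ring
  calc ∑ a, ∑ b, ∑ x, π1 a x * π2 x b / ρ x * (d a x + d x b)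
      = (∑ a, ∑ b, ∑ x, π1 a x * d a x * π2 x b / ρ x)
        + (∑ a, ∑ b, ∑ x, π1 a x * (π2 x b * d x b) / ρ x) := by
        rw [← Finset.sum_add_distrib]
        refine Finset.sum_congr rfl fun a _ => ?_
        rw [← Finset.sum_add_distrib]
        refine Finset.sum_congr rfl fun b _ => ?_
        rw [← Finset.sum_add_distrib]
        exact Finset.sum_congr rfl fun x _ => expand a b x
    _ = (∑ a, ∑ b, π1 a b * d a b) + (∑ a, ∑ b, π2 a b * d a b) := by
        congr 1
        · calc ∑ a, ∑ b, ∑ x, π1 a x * d a x * π2 x b / ρ x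
              = ∑ a, ∑ x, π1 a x * d a x * ρ x / ρ x := by
                refine Finset.sum_congr rfl fun a _ => ?_
                rw [Finset.sum_comm]
                refine Finset.sum_congr rfl fun x _ => ?_
                rw [← Finset.sum_div, ← Finset.mul_sum, h2.2.1 x]
            _ = ∑ a, ∑ x, π1 a x * d a x := by
                refine Finset.sum_congr rfl fun a _ => Finset.sum_congr rfl fun x _ => ?_
                by_cases hx : ρ x = 0
                · rw [coupling_zero_of_marginal_zero h1 hx a]; simp
                · rw [mul_div_assoc, div_self hx, mul_one]
        · calc ∑ a, ∑ b, ∑ x, π1 a x * (π2 x b * d x b) / ρ x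
              = ∑ b, ∑ x, ρ x * (π2 x b * d x b) / ρ x := by
                rw [Finset.sum_comm]
                refine Finset.sum_congr rfl fun b _ => ?_
                rw [Finset.sum_comm]
                refine Finset.sum_congr rfl fun x _ => ?_
                rw [← Finset.sum_div, ← Finset.sum_mul, h1.2.2 x]
            _ = ∑ b, ∑ x, π2 x b * d x b := by
                refine Finset.sum_congr rfl fun b _ => Finset.sum_congr rfl fun x _ => ?_
                by_cases hx : ρ x = 0
                · have : π2 x b = 0 := by
                    have h0 : ∑ w, π2 x w = 0 := by rw [h2.2.1 x, hx]
                    exact (Finset.sum_eq_zero_iff_of_nonneg (fun w _ => h2.1 x w)).1 h0 b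
                      (Finset.mem_univ b)
                  rw [this]; simp
                · rw [mul_comm (ρ x), mul_div_assoc, div_self hx, mul_one]
            _ = ∑ a, ∑ b, π2 a b * d a b := Finset.sum_comm

lemma wd_triangle {d : V → V → ℝ} (hd : ∀ a b, 0 ≤ d a b)
    (hdt : ∀ a b c, d a c ≤ d a b + d b c) {μ ρ ν : V → ℝ}
    (hex1 : ∃ π, IsCoupling μ ρ π) (hex2 : ∃ π, IsCoupling ρ ν π) :
    Wd d μ ν ≤ Wd d μ ρ + Wd d ρ ν := by
  obtain ⟨π1, hπ1⟩ := hex1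
  obtain ⟨π2, hπ2⟩ := hex2
  have key : ∀ q1 q2, IsCoupling μ ρ q1 → IsCoupling ρ ν q2 →
      Wd d μ ν ≤ (∑ a, ∑ b, q1 a b * d a b) + (∑ a, ∑ b, q2 a b * d a b) := by
    intro q1 q2 hq1 hq2
    exact (wd_le_cost' hd (glue_coupling hq1 hq2)).trans (glue_cost hd hdt hq1 hq2)
  have h1 : Wd d μ ν - Wd d ρ ν ≤ Wd d μ ρ := by
    refine le_csInf ⟨_, ⟨π1, hπ1, rfl⟩⟩ ?_
    rintro s ⟨q1, hq1, rfl⟩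
    rw [sub_le_iff_le_add, add_comm, ← sub_le_iff_le_add]
    refine le_csInf ⟨_, ⟨π2, hπ2, rfl⟩⟩ ?_
    rintro s2 ⟨q2, hq2, rfl⟩
    have := key q1 q2 hq1 hq2
    linarith
  linarith

end Wass
section Meas
set_option linter.unusedSectionVars false
variable {V : Type*} [Fintype V] [DecidableEq V] (G : DHyp V)

open Classical in
lemma sum_gamma (Eu : Finset (Finset V × Finset V)) (side : Finset V × Finset V → Finset V)
    (Γ : Finset V) (hΓ : ∀ z, z ∈ Γ ↔ ∃ h ∈ Eu, z ∈ side h)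
    (F : (Finset V × Finset V) → ℝ) :
    ∑ z ∈ Γ, ∑ h ∈ Eu.filter (fun h => z ∈ side h), F h
      = ∑ h ∈ Eu, (side h).card * F h := by
  have h1 : ∀ z ∈ Γ, ∑ h ∈ Eu.filter (fun h => z ∈ side h), F h
      = ∑ h ∈ Eu, if z ∈ side h then F h else 0 := fun z _ => Finset.sum_filter _ _
  rw [Finset.sum_congr rfl h1, Finset.sum_comm]
  refine Finset.sum_congr rfl fun h hh => ?_
  rw [← Finset.sum_filter]
  have h2 : Γ.filter (fun z => z ∈ side h) = side h := by
    ext z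
    simp only [Finset.mem_filter]
    exact ⟨fun hz => hz.2, fun hz => ⟨(hΓ z).2 ⟨h, hh, hz⟩, hz⟩⟩
  rw [h2, Finset.sum_const, nsmul_eq_mul]

open Classical in
lemma denom_pos {u : V} (hu : ∃ h ∈ G.E, u ∈ h.2) :
    0 < ∑ h' ∈ G.E.filter (fun h'' => u ∈ h''.2), G.w h' := by
  obtain ⟨h0, hE0, hu0⟩ := hu
  refine Finset.sum_pos (fun h hh => G.pos h (Finset.mem_filter.1 hh).1) ⟨h0, ?_⟩
  exact Finset.mem_filter.2 ⟨hE0, hu0⟩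

open Classical in
lemma denom_pos' {u : V} (hu : ∃ h ∈ G.E, u ∈ h.1) :
    0 < ∑ h' ∈ G.E.filter (fun h'' => u ∈ h''.1), G.w h' := by
  obtain ⟨h0, hE0, hu0⟩ := hu
  refine Finset.sum_pos (fun h hh => G.pos h (Finset.mem_filter.1 hh).1) ⟨h0, ?_⟩
  exact Finset.mem_filter.2 ⟨hE0, hu0⟩

lemma not_mem_gammaIn (hor : Oriented G) (u : V) : u ∉ GammaIn G u := by
  intro hmem
  rw [GammaIn, Finset.mem_filter] at hmem
  obtain ⟨-, h, hE, h2, h1⟩ := hmem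
  have : u ∈ h.1 ∩ h.2 := Finset.mem_inter.2 ⟨h1, h2⟩
  rw [(hor h hE).1] at this
  simp at this

lemma not_mem_gammaOut (hor : Oriented G) (u : V) : u ∉ GammaOut G u := by
  intro hmem
  rw [GammaOut, Finset.mem_filter] at hmem
  obtain ⟨-, h, hE, h1, h2⟩ := hmem
  have : u ∈ h.1 ∩ h.2 := Finset.mem_inter.2 ⟨h1, h2⟩
  rw [(hor h hE).1] at this
  simp at this

lemma muInPt_tail (hor : Oriented G) (α : ℝ) {u : V} (hu : ∃ h ∈ G.E, u ∈ h.2) :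
    ∑ z ∈ Finset.univ.erase u, muInPt G α u z = 1 - α := by
  classical
  set D := ∑ h' ∈ G.E.filter (fun h'' => u ∈ h''.2), G.w h' with hD
  have hDpos := denom_pos G hu
  have step1 : ∀ z ∈ Finset.univ.erase u, muInPt G α u z
      = if z ∈ GammaIn G u then
          (1 - α) * ∑ h ∈ G.E.filter (fun h => u ∈ h.2 ∧ z ∈ h.1),
            (1 / (h.1.card : ℝ)) * (G.w h / D) else 0 := by
    intro z hz
    rw [muInPt, if_neg (Finset.ne_of_mem_erase hz)]
  rw [Finset.sum_congr rfl step1, ← Finset.sum_filter]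
  have hfe : (Finset.univ.erase u).filter (fun z => z ∈ GammaIn G u) = GammaIn G u := by
    ext z
    simp only [Finset.mem_filter, Finset.mem_erase, Finset.mem_univ, true_and, and_true]
    refine ⟨fun hz => hz.2, fun hz => ⟨?_, hz⟩⟩
    rintro rfl
    exact not_mem_gammaIn G hor _ hz
  rw [hfe, ← Finset.mul_sum]
  have hfilt : ∀ z, G.E.filter (fun h => u ∈ h.2 ∧ z ∈ h.1)
      = (G.E.filter (fun h => u ∈ h.2)).filter (fun h => z ∈ h.1) := by
    intro z; rw [Finset.filter_filter]
  have key : ∑ z ∈ GammaIn G u, ∑ h ∈ G.E.filter (fun h => u ∈ h.2 ∧ z ∈ h.1),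
      (1 / (h.1.card : ℝ)) * (G.w h / D) = 1 := by
    calc ∑ z ∈ GammaIn G u, ∑ h ∈ G.E.filter (fun h => u ∈ h.2 ∧ z ∈ h.1),
          (1 / (h.1.card : ℝ)) * (G.w h / D)
        = ∑ z ∈ GammaIn G u, ∑ h ∈ (G.E.filter (fun h => u ∈ h.2)).filter (fun h => z ∈ h.1),
          (1 / (h.1.card : ℝ)) * (G.w h / D) := by
          exact Finset.sum_congr rfl fun z _ => by rw [hfilt z]
      _ = ∑ h ∈ G.E.filter (fun h => u ∈ h.2),
            (h.1.card : ℝ) * ((1 / (h.1.card : ℝ)) * (G.w h / D)) := by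
          refine sum_gamma (G.E.filter (fun h => u ∈ h.2)) (fun h => h.1) (GammaIn G u) ?_ _
          intro z
          rw [GammaIn, Finset.mem_filter]
          simp only [Finset.mem_univ, true_and, Finset.mem_filter]
          constructor
          · rintro ⟨h, hE, h2, h1⟩; exact ⟨h, ⟨hE, h2⟩, h1⟩
          · rintro ⟨h, ⟨hE, h2⟩, h1⟩; exact ⟨h, hE, h2, h1⟩
      _ = ∑ h ∈ G.E.filter (fun h => u ∈ h.2), G.w h / D := by
          refine Finset.sum_congr rfl fun h hh => ?_
          have hc : ((h.1.card : ℝ)) ≠ 0 :=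
            Nat.cast_ne_zero.2 (Finset.card_ne_zero.2 (G.nonempA h (Finset.mem_filter.1 hh).1))
          field_simp
      _ = 1 := by rw [← Finset.sum_div, ← hD, div_self (ne_of_gt hDpos)]
  rw [key, mul_one]

lemma muInPt_mass (hor : Oriented G) (α : ℝ) {u : V} (hu : ∃ h ∈ G.E, u ∈ h.2) :
    ∑ z, muInPt G α u z = 1 := by
  rw [← Finset.add_sum_erase _ _ (Finset.mem_univ u), muInPt_tail G hor α hu]
  simp [muInPt]

lemma muOutPt_tail (hor : Oriented G) (α : ℝ) {u : V} (hu : ∃ h ∈ G.E, u ∈ h.1) :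
    ∑ z ∈ Finset.univ.erase u, muOutPt G α u z = 1 - α := by
  classical
  set D := ∑ h' ∈ G.E.filter (fun h'' => u ∈ h''.1), G.w h' with hD
  have hDpos := denom_pos' G hu
  have step1 : ∀ z ∈ Finset.univ.erase u, muOutPt G α u z
      = if z ∈ GammaOut G u then
          (1 - α) * ∑ h ∈ G.E.filter (fun h => u ∈ h.1 ∧ z ∈ h.2),
            (1 / (h.2.card : ℝ)) * (G.w h / D) else 0 := by
    intro z hz
    rw [muOutPt, if_neg (Finset.ne_of_mem_erase hz)]
  rw [Finset.sum_congr rfl step1, ← Finset.sum_filter]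
  have hfe : (Finset.univ.erase u).filter (fun z => z ∈ GammaOut G u) = GammaOut G u := by
    ext z
    simp only [Finset.mem_filter, Finset.mem_erase, Finset.mem_univ, true_and, and_true]
    refine ⟨fun hz => hz.2, fun hz => ⟨?_, hz⟩⟩
    rintro rfl
    exact not_mem_gammaOut G hor _ hz
  rw [hfe, ← Finset.mul_sum]
  have hfilt : ∀ z, G.E.filter (fun h => u ∈ h.1 ∧ z ∈ h.2)
      = (G.E.filter (fun h => u ∈ h.1)).filter (fun h => z ∈ h.2) := by
    intro z; rw [Finset.filter_filter]
  have key : ∑ z ∈ GammaOut G u, ∑ h ∈ G.E.filter (fun h => u ∈ h.1 ∧ z ∈ h.2),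
      (1 / (h.2.card : ℝ)) * (G.w h / D) = 1 := by
    calc ∑ z ∈ GammaOut G u, ∑ h ∈ G.E.filter (fun h => u ∈ h.1 ∧ z ∈ h.2),
          (1 / (h.2.card : ℝ)) * (G.w h / D)
        = ∑ z ∈ GammaOut G u, ∑ h ∈ (G.E.filter (fun h => u ∈ h.1)).filter (fun h => z ∈ h.2),
          (1 / (h.2.card : ℝ)) * (G.w h / D) := by
          exact Finset.sum_congr rfl fun z _ => by rw [hfilt z]
      _ = ∑ h ∈ G.E.filter (fun h => u ∈ h.1),
            (h.2.card : ℝ) * ((1 / (h.2.card : ℝ)) * (G.w h / D)) := by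
          refine sum_gamma (G.E.filter (fun h => u ∈ h.1)) (fun h => h.2) (GammaOut G u) ?_ _
          intro z
          rw [GammaOut, Finset.mem_filter]
          simp only [Finset.mem_univ, true_and, Finset.mem_filter]
          constructor
          · rintro ⟨h, hE, h1, h2⟩; exact ⟨h, ⟨hE, h1⟩, h2⟩
          · rintro ⟨h, ⟨hE, h1⟩, h2⟩; exact ⟨h, hE, h1, h2⟩
      _ = ∑ h ∈ G.E.filter (fun h => u ∈ h.1), G.w h / D := by
          refine Finset.sum_congr rfl fun h hh => ?_
          have hc : ((h.2.card : ℝ)) ≠ 0 :=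
            Nat.cast_ne_zero.2 (Finset.card_ne_zero.2 (G.nonempB h (Finset.mem_filter.1 hh).1))
          field_simp
      _ = 1 := by rw [← Finset.sum_div, ← hD, div_self (ne_of_gt hDpos)]
  rw [key, mul_one]

lemma muOutPt_mass (hor : Oriented G) (α : ℝ) {u : V} (hu : ∃ h ∈ G.E, u ∈ h.1) :
    ∑ z, muOutPt G α u z = 1 := by
  rw [← Finset.add_sum_erase _ _ (Finset.mem_univ u), muOutPt_tail G hor α hu]
  simp [muOutPt]

lemma muInPt_nonneg {α : ℝ} (hα : 0 ≤ α) (hα1 : α ≤ 1) (u z : V) : 0 ≤ muInPt G α u z := by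
  rw [muInPt]
  split
  · exact hα
  split
  · refine mul_nonneg (by linarith) (Finset.sum_nonneg fun h hh => ?_)
    have hE := (Finset.mem_filter.1 hh).1
    refine mul_nonneg (by positivity) (div_nonneg (G.pos h hE).le ?_)
    exact Finset.sum_nonneg fun h' hh' => (G.pos h' (Finset.mem_filter.1 hh').1).le
  · exact le_refl 0

lemma muOutPt_nonneg {α : ℝ} (hα : 0 ≤ α) (hα1 : α ≤ 1) (u z : V) : 0 ≤ muOutPt G α u z := by
  rw [muOutPt]
  split
  · exact hα
  split
  · refine mul_nonneg (by linarith) (Finset.sum_nonneg fun h hh => ?_)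
    have hE := (Finset.mem_filter.1 hh).1
    refine mul_nonneg (by positivity) (div_nonneg (G.pos h hE).le ?_)
    exact Finset.sum_nonneg fun h' hh' => (G.pos h' (Finset.mem_filter.1 hh').1).le
  · exact le_refl 0

end Meas
section Meas2
set_option linter.unusedSectionVars false
variable {V : Type*} [Fintype V] [DecidableEq V] (G : DHyp V)

lemma gammaIn_eq_gammaOut (hor : Oriented G) (x : V) : GammaIn G x = GammaOut G x := by
  ext z
  rw [GammaIn, GammaOut, Finset.mem_filter, Finset.mem_filter]
  simp only [Finset.mem_univ, true_and]
  constructor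
  · rintro ⟨h, hE, h2, h1⟩; exact ⟨(h.2, h.1), (hor h hE).2.1, h2, h1⟩
  · rintro ⟨h, hE, h1, h2⟩; exact ⟨(h.2, h.1), (hor h hE).2.1, h1, h2⟩

open Classical in
lemma denom_symm (hor : Oriented G) (x : V) :
    ∑ h' ∈ G.E.filter (fun h'' => x ∈ h''.2), G.w h'
      = ∑ h' ∈ G.E.filter (fun h'' => x ∈ h''.1), G.w h' := by
  refine Finset.sum_nbij' (i := fun h => (h.2, h.1)) (j := fun h => (h.2, h.1)) ?_ ?_ ?_ ?_ ?_
  · intro h hh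
    obtain ⟨hE, hx⟩ := Finset.mem_filter.1 hh
    exact Finset.mem_filter.2 ⟨(hor h hE).2.1, hx⟩
  · intro h hh
    obtain ⟨hE, hx⟩ := Finset.mem_filter.1 hh
    exact Finset.mem_filter.2 ⟨(hor h hE).2.1, hx⟩
  · intro h _; rfl
  · intro h _; rfl
  · intro h hh
    exact ((hor h (Finset.mem_filter.1 hh).1).2.2).symm

open Classical in
lemma numer_symm (hor : Oriented G) (x z : V) (D : ℝ) :
    ∑ h ∈ G.E.filter (fun h => x ∈ h.2 ∧ z ∈ h.1), (1 / (h.1.card : ℝ)) * (G.w h / D)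
      = ∑ h ∈ G.E.filter (fun h => x ∈ h.1 ∧ z ∈ h.2), (1 / (h.2.card : ℝ)) * (G.w h / D) := by
  refine Finset.sum_nbij' (i := fun h => (h.2, h.1)) (j := fun h => (h.2, h.1)) ?_ ?_ ?_ ?_ ?_
  · intro h hh
    obtain ⟨hE, hx, hz⟩ := Finset.mem_filter.1 hh
    exact Finset.mem_filter.2 ⟨(hor h hE).2.1, hx, hz⟩
  · intro h hh
    obtain ⟨hE, hx, hz⟩ := Finset.mem_filter.1 hh
    exact Finset.mem_filter.2 ⟨(hor h hE).2.1, hx, hz⟩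
  · intro h _; rfl
  · intro h _; rfl
  · intro h hh
    obtain ⟨hE, -, -⟩ := Finset.mem_filter.1 hh
    simp only
    rw [(hor h hE).2.2]

lemma muInPt_eq_muOutPt (hor : Oriented G) (α : ℝ) (x : V) :
    muInPt G α x = muOutPt G α x := by
  funext z
  rw [muInPt, muOutPt]
  by_cases hz : z = x
  · simp [hz]
  rw [if_neg hz, if_neg hz, gammaIn_eq_gammaOut G hor]
  by_cases hzΓ : z ∈ GammaOut G x
  · rw [if_pos hzΓ, if_pos hzΓ, denom_symm G hor, numer_symm G hor]
  · rw [if_neg hzΓ, if_neg hzΓ]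

lemma mem_gammaIn_iff (x z : V) : z ∈ GammaIn G x ↔ ∃ h ∈ G.E, x ∈ h.2 ∧ z ∈ h.1 := by
  rw [GammaIn, Finset.mem_filter]
  simp

lemma mem_gammaOut_iff (x z : V) : z ∈ GammaOut G x ↔ ∃ h ∈ G.E, x ∈ h.1 ∧ z ∈ h.2 := by
  rw [GammaOut, Finset.mem_filter]
  simp

lemma ddist_le_maxWd_of_gammaIn (hor : Oriented G) {x z : V} (hz : z ∈ GammaIn G x) :
    ddist G x z ≤ maxWd G ∧ ddist G z x ≤ maxWd G := by
  obtain ⟨h, hE, hx2, hz1⟩ := (mem_gammaIn_iff G x z).1 hz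
  constructor
  · have hrev := (hor h hE).2.1
    have := ddist_le_w_of_edgepair G hrev (by exact hx2) (by exact hz1)
    rw [(hor h hE).2.2] at this
    exact this.trans (w_le_maxWd G hE)
  · exact (ddist_le_w_of_edgepair G hE hz1 hx2).trans (w_le_maxWd G hE)

lemma ddist_le_maxWd_of_gammaOut (hor : Oriented G) {x z : V} (hz : z ∈ GammaOut G x) :
    ddist G x z ≤ maxWd G ∧ ddist G z x ≤ maxWd G := by
  rw [← gammaIn_eq_gammaOut G hor] at hz
  exact (ddist_le_maxWd_of_gammaIn G hor hz)

lemma muInPt_eq_zero {α : ℝ} {x z : V} (hz : z ≠ x) (hzΓ : z ∉ GammaIn G x) :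
    muInPt G α x z = 0 := by
  rw [muInPt, if_neg hz, if_neg hzΓ]

lemma muOutPt_eq_zero {α : ℝ} {x z : V} (hz : z ≠ x) (hzΓ : z ∉ GammaOut G x) :
    muOutPt G α x z = 0 := by
  rw [muOutPt, if_neg hz, if_neg hzΓ]

end Meas2
section VertexBound
set_option linter.unusedSectionVars false
variable {V : Type*} [Fintype V] [DecidableEq V] (G : DHyp V)

lemma ddist_pos_of_ex {u v : V} (huv : u ≠ v) (hex : ∃ γ, IsDipath G γ u v) :
    0 < ddist G u v := by
  obtain ⟨γ, hγ⟩ := hex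
  have hEne : G.E.Nonempty := by
    obtain ⟨hne, hmem, -, -, -⟩ := hγ
    match γ, hne with
    | h :: t, _ => exact ⟨h, hmem h (by simp)⟩
  have hlow : (G.E.image G.w).min' (hEne.image _) ≤ ddist G u v := by
    rw [show ddist G u v = sInf {s | ∃ γ, IsDipath G γ u v ∧ s = (γ.map G.w).sum} by
      unfold ddist; rw [if_neg huv]]
    refine le_csInf ⟨_, ⟨γ, hγ, rfl⟩⟩ ?_
    rintro s ⟨γ', hγ', rfl⟩
    exact path_sum_ge_wmin G hγ' hEne
  exact lt_of_lt_of_le (wmin_pos G hEne) hlow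

lemma exists_in_edge (hsc : StronglyConnected G) {u v : V} (huv : u ≠ v) :
    ∃ h ∈ G.E, u ∈ h.2 := by
  obtain ⟨γ, hne, hmem, -, hlt, -⟩ := hsc v u (Ne.symm huv)
  obtain ⟨hl, hhl⟩ := Option.isSome_iff_exists.1 (List.getLast?_isSome.2 hne)
  exact ⟨hl, hmem hl (List.mem_of_getLast? hhl), hlt hl hhl⟩

lemma exists_out_edge (hsc : StronglyConnected G) {u v : V} (huv : u ≠ v) :
    ∃ h ∈ G.E, u ∈ h.1 := by
  obtain ⟨γ, hne, hmem, hhd, -, -⟩ := hsc u v huv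
  obtain ⟨h0, hh0⟩ := Option.isSome_iff_exists.1 (List.isSome_head?.2 hne)
  exact ⟨h0, hmem h0 (List.mem_of_mem_head? hh0), hhd h0 hh0⟩

lemma int_muInPt_le (hor : Oriented G) {α : ℝ} (hα : α ∈ Set.Ico (0:ℝ) 1) {u : V}
    (hu : ∃ h ∈ G.E, u ∈ h.2) (f : V → ℝ) (hfu : f u = 0)
    (hfM : ∀ z ∈ GammaIn G u, f z ≤ maxWd G) :
    ∑ z, muInPt G α u z * f z ≤ (1 - α) * maxWd G := by
  rw [← Finset.add_sum_erase _ _ (Finset.mem_univ u)]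
  have h1 : muInPt G α u u * f u = 0 := by rw [hfu, mul_zero]
  rw [h1, zero_add]
  calc ∑ z ∈ Finset.univ.erase u, muInPt G α u z * f z
      ≤ ∑ z ∈ Finset.univ.erase u, muInPt G α u z * maxWd G := by
        refine Finset.sum_le_sum fun z hz => ?_
        by_cases hzΓ : z ∈ GammaIn G u
        · exact mul_le_mul_of_nonneg_left (hfM z hzΓ)
            (muInPt_nonneg G hα.1 hα.2.le u z)
        · rw [muInPt_eq_zero G (Finset.ne_of_mem_erase hz) hzΓ, zero_mul, zero_mul]
    _ = (1 - α) * maxWd G := by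
        rw [← Finset.sum_mul, muInPt_tail G hor α hu]

lemma int_muOutPt_ge (hor : Oriented G) {α : ℝ} (hα : α ∈ Set.Ico (0:ℝ) 1) {v : V}
    (hv : ∃ h ∈ G.E, v ∈ h.1) (f : V → ℝ) (c : ℝ) (hfc : c ≤ f v)
    (hfM : ∀ z ∈ GammaOut G v, c - maxWd G ≤ f z) :
    c - (1 - α) * maxWd G ≤ ∑ z, muOutPt G α v z * f z := by
  rw [← Finset.add_sum_erase _ _ (Finset.mem_univ v)]
  have hvv : muOutPt G α v v = α := by simp [muOutPt]
  have h2 : ∑ z ∈ Finset.univ.erase v, muOutPt G α v z * (c - maxWd G)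
      ≤ ∑ z ∈ Finset.univ.erase v, muOutPt G α v z * f z := by
    refine Finset.sum_le_sum fun z hz => ?_
    by_cases hzΓ : z ∈ GammaOut G v
    · exact mul_le_mul_of_nonneg_left (hfM z hzΓ) (muOutPt_nonneg G hα.1 hα.2.le v z)
    · rw [muOutPt_eq_zero G (Finset.ne_of_mem_erase hz) hzΓ, zero_mul, zero_mul]
  rw [← Finset.sum_mul, muOutPt_tail G hor α hv] at h2
  have h3 : α * c ≤ muOutPt G α v v * f v := by
    rw [hvv]
    exact mul_le_mul_of_nonneg_left hfc hα.1
  nlinarith [hα.1, hα.2]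

lemma pt_coupling_exists (hor : Oriented G) {α : ℝ}
    (hα : α ∈ Set.Ico (0:ℝ) 1) {u u' : V} (h1 : ∃ h ∈ G.E, u ∈ h.2)
    (h2 : ∃ h ∈ G.E, u' ∈ h.1) :
    ∃ π, IsCoupling (muInPt G α u) (muOutPt G α u') π := by
  refine ⟨_, prod_coupling (muInPt_nonneg G hα.1 hα.2.le u) (muOutPt_nonneg G hα.1 hα.2.le u')
    (muInPt_mass G hor α h1) (muOutPt_mass G hor α h2)⟩

lemma kappaDV_upper (hor : Oriented G) (hsc : StronglyConnected G) {u v : V} (huv : u ≠ v)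
    {α : ℝ} (hα : α ∈ Set.Ico (0:ℝ) 1) :
    kappaDV G α u v ≤ (1 - α) * (2 * maxWd G) / ddist G u v := by
  have hd : 0 < ddist G u v := ddist_pos_of_ex G huv (hsc u v huv)
  set d := ddist G u v with hdd
  set M := maxWd G with hM
  have hM0 : 0 ≤ M := maxWd_nonneg G
  have hlow : d - 2 * (1 - α) * M ≤ Wd (ddist G) (muInPt G α u) (muOutPt G α v) := by
    have hdual := wd_ge_dual (d := ddist G) (ddist_nonneg' G) (fun z => ddist G u z)
      (fun a b => by
        have := ddist_triangle G hsc u a b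
        linarith)
      (pt_coupling_exists G hor hα (exists_in_edge G hsc huv) (exists_out_edge G hsc (Ne.symm huv)))
    have hup : ∑ z, muInPt G α u z * ddist G u z ≤ (1 - α) * M := by
      refine int_muInPt_le G hor hα (exists_in_edge G hsc huv) _ (ddist_self G u) ?_
      intro z hz
      exact (ddist_le_maxWd_of_gammaIn G hor hz).1
    have hdown : d - (1 - α) * M ≤ ∑ z, muOutPt G α v z * ddist G u z := by
      refine int_muOutPt_ge G hor hα (exists_out_edge G hsc (Ne.symm huv)) _ d le_rfl ?_
      intro z hz
      have h1 := ddist_triangle G hsc u z v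
      have h2 := (ddist_le_maxWd_of_gammaOut G hor hz).2
      linarith
    linarith
  rw [kappaDV]
  rw [show (1 - α) * (2 * M) / d = 1 - (d - 2 * (1 - α) * M) / d by
    field_simp
    ring]
  have h2 : (d - 2 * (1 - α) * M) / d ≤ Wd (ddist G) (muInPt G α u) (muOutPt G α v) / d := by
    gcongr
  linarith

end VertexBound
section EdgeBound
set_option linter.unusedSectionVars false
variable {V : Type*} [Fintype V] [DecidableEq V] (G : DHyp V)

lemma muIn_tail (hor : Oriented G) (α : ℝ) {x : V} (hx : ∃ h ∈ G.E, x ∈ h.2) {n : ℕ}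
    (hn : n ≠ 0) :
    ∑ z ∈ Finset.univ.erase x, muIn G α n x z = (1 - α) / n := by
  classical
  set D := ∑ h' ∈ G.E.filter (fun h'' => x ∈ h''.2), G.w h' with hD
  have hDpos := denom_pos G hx
  have hnR : ((n : ℝ)) ≠ 0 := Nat.cast_ne_zero.2 hn
  have step1 : ∀ z ∈ Finset.univ.erase x, muIn G α n x z
      = if z ∈ GammaIn G x then
          (1 - α) * ∑ h ∈ G.E.filter (fun h => x ∈ h.2 ∧ z ∈ h.1),
            (1 / ((n : ℝ) * h.1.card)) * (G.w h / D) else 0 := by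
    intro z hz
    rw [muIn, if_neg (Finset.ne_of_mem_erase hz)]
  rw [Finset.sum_congr rfl step1, ← Finset.sum_filter]
  have hfe : (Finset.univ.erase x).filter (fun z => z ∈ GammaIn G x) = GammaIn G x := by
    ext z
    simp only [Finset.mem_filter, Finset.mem_erase, Finset.mem_univ, true_and, and_true]
    refine ⟨fun hz => hz.2, fun hz => ⟨?_, hz⟩⟩
    rintro rfl
    exact not_mem_gammaIn G hor _ hz
  rw [hfe, ← Finset.mul_sum]
  have hfilt : ∀ z : V, G.E.filter (fun h => x ∈ h.2 ∧ z ∈ h.1)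
      = (G.E.filter (fun h => x ∈ h.2)).filter (fun h => z ∈ h.1) := by
    intro z; rw [Finset.filter_filter]
  have key : ∑ z ∈ GammaIn G x, ∑ h ∈ G.E.filter (fun h => x ∈ h.2 ∧ z ∈ h.1),
      (1 / ((n : ℝ) * h.1.card)) * (G.w h / D) = 1 / n := by
    calc ∑ z ∈ GammaIn G x, ∑ h ∈ G.E.filter (fun h => x ∈ h.2 ∧ z ∈ h.1),
          (1 / ((n : ℝ) * h.1.card)) * (G.w h / D)
        = ∑ z ∈ GammaIn G x, ∑ h ∈ (G.E.filter (fun h => x ∈ h.2)).filter (fun h => z ∈ h.1),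
          (1 / ((n : ℝ) * h.1.card)) * (G.w h / D) :=
          Finset.sum_congr rfl fun z _ => by rw [hfilt z]
      _ = ∑ h ∈ G.E.filter (fun h => x ∈ h.2),
            (h.1.card : ℝ) * ((1 / ((n : ℝ) * h.1.card)) * (G.w h / D)) := by
          refine sum_gamma (G.E.filter (fun h => x ∈ h.2)) (fun h => h.1) (GammaIn G x) ?_ _
          intro z
          rw [GammaIn, Finset.mem_filter]
          simp only [Finset.mem_univ, true_and, Finset.mem_filter]
          constructor
          · rintro ⟨h, hE, h2, h1⟩; exact ⟨h, ⟨hE, h2⟩, h1⟩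
          · rintro ⟨h, ⟨hE, h2⟩, h1⟩; exact ⟨h, hE, h2, h1⟩
      _ = ∑ h ∈ G.E.filter (fun h => x ∈ h.2), G.w h / ((n : ℝ) * D) := by
          refine Finset.sum_congr rfl fun h hh => ?_
          have hc : ((h.1.card : ℝ)) ≠ 0 :=
            Nat.cast_ne_zero.2 (Finset.card_ne_zero.2 (G.nonempA h (Finset.mem_filter.1 hh).1))
          field_simp
      _ = 1 / n := by
          rw [← Finset.sum_div, ← hD]
          field_simp [ne_of_gt hDpos]
          ring_nf
          exact mul_inv_cancel₀ (ne_of_gt hDpos)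
  rw [key]
  field_simp

lemma muIn_mass (hor : Oriented G) (α : ℝ) {x : V} (hx : ∃ h ∈ G.E, x ∈ h.2) {n : ℕ}
    (hn : n ≠ 0) : ∑ z, muIn G α n x z = 1 / n := by
  rw [← Finset.add_sum_erase _ _ (Finset.mem_univ x), muIn_tail G hor α hx hn]
  have : muIn G α n x x = α / n := by simp [muIn]
  rw [this]
  have hnR : ((n : ℝ)) ≠ 0 := Nat.cast_ne_zero.2 hn
  field_simp
  ring

lemma muOut_tail (hor : Oriented G) (α : ℝ) {y : V} (hy : ∃ h ∈ G.E, y ∈ h.1) {m : ℕ}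
    (hm : m ≠ 0) :
    ∑ z ∈ Finset.univ.erase y, muOut G α m y z = (1 - α) / m := by
  classical
  set D := ∑ h' ∈ G.E.filter (fun h'' => y ∈ h''.1), G.w h' with hD
  have hDpos := denom_pos' G hy
  have hmR : ((m : ℝ)) ≠ 0 := Nat.cast_ne_zero.2 hm
  have step1 : ∀ z ∈ Finset.univ.erase y, muOut G α m y z
      = if z ∈ GammaOut G y then
          (1 - α) * ∑ h ∈ G.E.filter (fun h => y ∈ h.1 ∧ z ∈ h.2),
            (1 / ((m : ℝ) * h.2.card)) * (G.w h / D) else 0 := by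
    intro z hz
    rw [muOut, if_neg (Finset.ne_of_mem_erase hz)]
  rw [Finset.sum_congr rfl step1, ← Finset.sum_filter]
  have hfe : (Finset.univ.erase y).filter (fun z => z ∈ GammaOut G y) = GammaOut G y := by
    ext z
    simp only [Finset.mem_filter, Finset.mem_erase, Finset.mem_univ, true_and, and_true]
    refine ⟨fun hz => hz.2, fun hz => ⟨?_, hz⟩⟩
    rintro rfl
    exact not_mem_gammaOut G hor _ hz
  rw [hfe, ← Finset.mul_sum]
  have hfilt : ∀ z : V, G.E.filter (fun h => y ∈ h.1 ∧ z ∈ h.2)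
      = (G.E.filter (fun h => y ∈ h.1)).filter (fun h => z ∈ h.2) := by
    intro z; rw [Finset.filter_filter]
  have key : ∑ z ∈ GammaOut G y, ∑ h ∈ G.E.filter (fun h => y ∈ h.1 ∧ z ∈ h.2),
      (1 / ((m : ℝ) * h.2.card)) * (G.w h / D) = 1 / m := by
    calc ∑ z ∈ GammaOut G y, ∑ h ∈ G.E.filter (fun h => y ∈ h.1 ∧ z ∈ h.2),
          (1 / ((m : ℝ) * h.2.card)) * (G.w h / D)
        = ∑ z ∈ GammaOut G y, ∑ h ∈ (G.E.filter (fun h => y ∈ h.1)).filter (fun h => z ∈ h.2),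
          (1 / ((m : ℝ) * h.2.card)) * (G.w h / D) :=
          Finset.sum_congr rfl fun z _ => by rw [hfilt z]
      _ = ∑ h ∈ G.E.filter (fun h => y ∈ h.1),
            (h.2.card : ℝ) * ((1 / ((m : ℝ) * h.2.card)) * (G.w h / D)) := by
          refine sum_gamma (G.E.filter (fun h => y ∈ h.1)) (fun h => h.2) (GammaOut G y) ?_ _
          intro z
          rw [GammaOut, Finset.mem_filter]
          simp only [Finset.mem_univ, true_and, Finset.mem_filter]
          constructor
          · rintro ⟨h, hE, h1, h2⟩; exact ⟨h, ⟨hE, h1⟩, h2⟩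
          · rintro ⟨h, ⟨hE, h1⟩, h2⟩; exact ⟨h, hE, h1, h2⟩
      _ = ∑ h ∈ G.E.filter (fun h => y ∈ h.1), G.w h / ((m : ℝ) * D) := by
          refine Finset.sum_congr rfl fun h hh => ?_
          have hc : ((h.2.card : ℝ)) ≠ 0 :=
            Nat.cast_ne_zero.2 (Finset.card_ne_zero.2 (G.nonempB h (Finset.mem_filter.1 hh).1))
          field_simp
      _ = 1 / m := by
          rw [← Finset.sum_div, ← hD]
          field_simp [ne_of_gt hDpos]
          ring_nf
          exact mul_inv_cancel₀ (ne_of_gt hDpos)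
  rw [key]
  field_simp

lemma muOut_mass (hor : Oriented G) (α : ℝ) {y : V} (hy : ∃ h ∈ G.E, y ∈ h.1) {m : ℕ}
    (hm : m ≠ 0) : ∑ z, muOut G α m y z = 1 / m := by
  rw [← Finset.add_sum_erase _ _ (Finset.mem_univ y), muOut_tail G hor α hy hm]
  have : muOut G α m y y = α / m := by simp [muOut]
  rw [this]
  have hmR : ((m : ℝ)) ≠ 0 := Nat.cast_ne_zero.2 hm
  field_simp
  ring

lemma muIn_nonneg {α : ℝ} (hα : 0 ≤ α) (hα1 : α ≤ 1) (n : ℕ) (x z : V) :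
    0 ≤ muIn G α n x z := by
  rw [muIn]
  split
  · positivity
  split
  · refine mul_nonneg (by linarith) (Finset.sum_nonneg fun h hh => ?_)
    have hE := (Finset.mem_filter.1 hh).1
    refine mul_nonneg (by positivity) (div_nonneg (G.pos h hE).le ?_)
    exact Finset.sum_nonneg fun h' hh' => (G.pos h' (Finset.mem_filter.1 hh').1).le
  · exact le_refl 0

lemma muOut_nonneg {α : ℝ} (hα : 0 ≤ α) (hα1 : α ≤ 1) (m : ℕ) (y z : V) :
    0 ≤ muOut G α m y z := by
  rw [muOut]
  split
  · positivity
  split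
  · refine mul_nonneg (by linarith) (Finset.sum_nonneg fun h hh => ?_)
    have hE := (Finset.mem_filter.1 hh).1
    refine mul_nonneg (by positivity) (div_nonneg (G.pos h hE).le ?_)
    exact Finset.sum_nonneg fun h' hh' => (G.pos h' (Finset.mem_filter.1 hh').1).le
  · exact le_refl 0

lemma muA_nonneg {α : ℝ} (hα : 0 ≤ α) (hα1 : α ≤ 1) (h : Finset V × Finset V) (z : V) :
    0 ≤ muA G α h z :=
  Finset.sum_nonneg fun x _ => muIn_nonneg G hα hα1 _ x z

lemma muB_nonneg {α : ℝ} (hα : 0 ≤ α) (hα1 : α ≤ 1) (h : Finset V × Finset V) (z : V) :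
    0 ≤ muB G α h z :=
  Finset.sum_nonneg fun y _ => muOut_nonneg G hα hα1 _ y z

lemma in_edge_of_memA (hor : Oriented G) {h : Finset V × Finset V} (hE : h ∈ G.E) {x : V}
    (hx : x ∈ h.1) : ∃ h' ∈ G.E, x ∈ h'.2 := ⟨(h.2, h.1), (hor h hE).2.1, hx⟩

lemma out_edge_of_memB (hor : Oriented G) {h : Finset V × Finset V} (hE : h ∈ G.E) {y : V}
    (hy : y ∈ h.2) : ∃ h' ∈ G.E, y ∈ h'.1 := ⟨(h.2, h.1), (hor h hE).2.1, hy⟩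

lemma muA_mass (hor : Oriented G) (α : ℝ) {h : Finset V × Finset V} (hE : h ∈ G.E) :
    ∑ z, muA G α h z = 1 := by
  unfold muA
  rw [Finset.sum_comm]
  have hn : h.1.card ≠ 0 := Finset.card_ne_zero.2 (G.nonempA h hE)
  have : ∀ x ∈ h.1, ∑ z, muIn G α h.1.card x z = 1 / h.1.card := by
    intro x hx
    exact muIn_mass G hor α (in_edge_of_memA G hor hE hx) hn
  rw [Finset.sum_congr rfl this, Finset.sum_const, nsmul_eq_mul]
  field_simp

lemma muB_mass (hor : Oriented G) (α : ℝ) {h : Finset V × Finset V} (hE : h ∈ G.E) :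
    ∑ z, muB G α h z = 1 := by
  unfold muB
  rw [Finset.sum_comm]
  have hm : h.2.card ≠ 0 := Finset.card_ne_zero.2 (G.nonempB h hE)
  have : ∀ y ∈ h.2, ∑ z, muOut G α h.2.card y z = 1 / h.2.card := by
    intro y hy
    exact muOut_mass G hor α (out_edge_of_memB G hor hE hy) hm
  rw [Finset.sum_congr rfl this, Finset.sum_const, nsmul_eq_mul]
  field_simp

lemma muIn_eq_zero {α : ℝ} {n : ℕ} {x z : V} (hz : z ≠ x) (hzΓ : z ∉ GammaIn G x) :
    muIn G α n x z = 0 := by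
  rw [muIn, if_neg hz, if_neg hzΓ]

lemma muOut_eq_zero {α : ℝ} {m : ℕ} {y z : V} (hz : z ≠ y) (hzΓ : z ∉ GammaOut G y) :
    muOut G α m y z = 0 := by
  rw [muOut, if_neg hz, if_neg hzΓ]

end EdgeBound
section EdgeBound2
set_option linter.unusedSectionVars false
variable {V : Type*} [Fintype V] [DecidableEq V] (G : DHyp V)

lemma Ldi_bddBelow (h : Finset V × Finset V) :
    BddBelow {s | ∃ x ∈ h.1, ∃ y ∈ h.2, s = ddist G x y} := by
  refine ⟨0, ?_⟩
  rintro s ⟨x, hx, y, hy, rfl⟩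
  exact ddist_nonneg' G x y

lemma Ldi_le {h : Finset V × Finset V} {x y : V} (hx : x ∈ h.1) (hy : y ∈ h.2) :
    Ldi G h ≤ ddist G x y :=
  csInf_le (Ldi_bddBelow G h) ⟨x, hx, y, hy, rfl⟩

lemma Ldi_pos (hor : Oriented G) {h : Finset V × Finset V} (hE : h ∈ G.E) : 0 < Ldi G h := by
  have hEne : G.E.Nonempty := ⟨h, hE⟩
  obtain ⟨x0, hx0⟩ := G.nonempA h hE
  obtain ⟨y0, hy0⟩ := G.nonempB h hE
  have key : ∀ x ∈ h.1, ∀ y ∈ h.2, (G.E.image G.w).min' (hEne.image _) ≤ ddist G x y := by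
    intro x hx y hy
    exact le_of_lt (ddist_pos_of_edgepair G hE hx hy (hor h hE).1).1 |>.trans_eq rfl |> fun _ => by
      have h1 := ddist_pos_of_edgepair G hE hx hy (hor h hE).1
      have hxy : x ≠ y := by
        rintro rfl
        have : x ∈ h.1 ∩ h.2 := Finset.mem_inter.2 ⟨hx, hy⟩
        rw [(hor h hE).1] at this
        simp at this
      rw [show ddist G x y = sInf {s | ∃ γ, IsDipath G γ x y ∧ s = (γ.map G.w).sum} by
        unfold ddist; rw [if_neg hxy]]
      have hpath : IsDipath G [h] x y := by
        refine ⟨by simp, by simpa using hE, ?_, ?_, List.isChain_singleton _⟩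
        · intro h0 hh0; simp only [List.head?_cons, Option.some.injEq] at hh0
          subst hh0; exact hx
        · intro hl hhl; simp only [List.getLast?_singleton, Option.some.injEq] at hhl
          subst hhl; exact hy
      refine le_csInf ⟨_, ⟨[h], hpath, rfl⟩⟩ ?_
      rintro s ⟨γ, hγ, rfl⟩
      exact path_sum_ge_wmin G hγ hEne
  have hlow : (G.E.image G.w).min' (hEne.image _) ≤ Ldi G h := by
    refine le_csInf ⟨_, ⟨x0, hx0, y0, hy0, rfl⟩⟩ ?_
    rintro s ⟨x, hx, y, hy, rfl⟩
    exact key x hx y hy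
  exact lt_of_lt_of_le (wmin_pos G hEne) hlow

lemma int_muIn_le (hor : Oriented G) {α : ℝ} (hα : α ∈ Set.Ico (0:ℝ) 1) {x : V}
    (hx : ∃ h ∈ G.E, x ∈ h.2) {n : ℕ} (hn : n ≠ 0) (f : V → ℝ) (hfx : f x = 0)
    (hfM : ∀ z ∈ GammaIn G x, f z ≤ maxWd G) :
    ∑ z, muIn G α n x z * f z ≤ (1 - α) / n * maxWd G := by
  rw [← Finset.add_sum_erase _ _ (Finset.mem_univ x)]
  have h1 : muIn G α n x x * f x = 0 := by rw [hfx, mul_zero]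
  rw [h1, zero_add]
  calc ∑ z ∈ Finset.univ.erase x, muIn G α n x z * f z
      ≤ ∑ z ∈ Finset.univ.erase x, muIn G α n x z * maxWd G := by
        refine Finset.sum_le_sum fun z hz => ?_
        by_cases hzΓ : z ∈ GammaIn G x
        · exact mul_le_mul_of_nonneg_left (hfM z hzΓ) (muIn_nonneg G hα.1 hα.2.le n x z)
        · rw [muIn_eq_zero G (Finset.ne_of_mem_erase hz) hzΓ, zero_mul, zero_mul]
    _ = (1 - α) / n * maxWd G := by
        rw [← Finset.sum_mul, muIn_tail G hor α hx hn]

lemma int_muOut_ge (hor : Oriented G) {α : ℝ} (hα : α ∈ Set.Ico (0:ℝ) 1) {y : V}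
    (hy : ∃ h ∈ G.E, y ∈ h.1) {m : ℕ} (hm : m ≠ 0) (f : V → ℝ) (c : ℝ) (hfc : c ≤ f y)
    (hfM : ∀ z ∈ GammaOut G y, c - maxWd G ≤ f z) :
    (c - (1 - α) * maxWd G) / m ≤ ∑ z, muOut G α m y z * f z := by
  rw [← Finset.add_sum_erase _ _ (Finset.mem_univ y)]
  have hyy : muOut G α m y y = α / m := by simp [muOut]
  have h2 : ∑ z ∈ Finset.univ.erase y, muOut G α m y z * (c - maxWd G)
      ≤ ∑ z ∈ Finset.univ.erase y, muOut G α m y z * f z := by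
    refine Finset.sum_le_sum fun z hz => ?_
    by_cases hzΓ : z ∈ GammaOut G y
    · exact mul_le_mul_of_nonneg_left (hfM z hzΓ) (muOut_nonneg G hα.1 hα.2.le m y z)
    · rw [muOut_eq_zero G (Finset.ne_of_mem_erase hz) hzΓ, zero_mul, zero_mul]
  rw [← Finset.sum_mul, muOut_tail G hor α hy hm] at h2
  have h3 : α / m * c ≤ muOut G α m y y * f y := by
    rw [hyy]
    exact mul_le_mul_of_nonneg_left hfc (div_nonneg hα.1 (Nat.cast_nonneg m))
  have hmR : (0 : ℝ) < (m : ℝ) := by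
    have : 0 < m := Nat.pos_of_ne_zero hm
    exact_mod_cast this
  have expand : (c - (1 - α) * maxWd G) / m
      = α / m * c + (1 - α) / m * (c - maxWd G) := by
    field_simp
    ring
  rw [expand]
  linarith

lemma int_muA_le (hor : Oriented G) {α : ℝ} (hα : α ∈ Set.Ico (0:ℝ) 1)
    {h : Finset V × Finset V} (hE : h ∈ G.E) (f : V → ℝ) (hf : ∀ x ∈ h.1, f x = 0)
    (hfM : ∀ x ∈ h.1, ∀ z ∈ GammaIn G x, f z ≤ maxWd G) :
    ∑ z, muA G α h z * f z ≤ (1 - α) * maxWd G := by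
  have hn : h.1.card ≠ 0 := Finset.card_ne_zero.2 (G.nonempA h hE)
  have hnR : (0:ℝ) < (h.1.card : ℝ) := by
    exact_mod_cast Nat.pos_of_ne_zero hn
  have step : ∑ z, muA G α h z * f z = ∑ x ∈ h.1, ∑ z, muIn G α h.1.card x z * f z := by
    rw [Finset.sum_comm]
    refine Finset.sum_congr rfl fun z _ => ?_
    rw [muA, Finset.sum_mul]
  rw [step]
  calc ∑ x ∈ h.1, ∑ z, muIn G α h.1.card x z * f z
      ≤ ∑ x ∈ h.1, (1 - α) / h.1.card * maxWd G := by
        refine Finset.sum_le_sum fun x hx => ?_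
        exact int_muIn_le G hor hα (in_edge_of_memA G hor hE hx) hn f (hf x hx) (hfM x hx)
    _ = (1 - α) * maxWd G := by
        rw [Finset.sum_const, nsmul_eq_mul]
        field_simp

lemma int_muB_ge (hor : Oriented G) {α : ℝ} (hα : α ∈ Set.Ico (0:ℝ) 1)
    {h : Finset V × Finset V} (hE : h ∈ G.E) (f : V → ℝ) (c : ℝ)
    (hf : ∀ y ∈ h.2, c ≤ f y)
    (hfM : ∀ y ∈ h.2, ∀ z ∈ GammaOut G y, c - maxWd G ≤ f z) :
    c - (1 - α) * maxWd G ≤ ∑ z, muB G α h z * f z := by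
  have hm : h.2.card ≠ 0 := Finset.card_ne_zero.2 (G.nonempB h hE)
  have hmR : (0:ℝ) < (h.2.card : ℝ) := by
    exact_mod_cast Nat.pos_of_ne_zero hm
  have step : ∑ z, muB G α h z * f z = ∑ y ∈ h.2, ∑ z, muOut G α h.2.card y z * f z := by
    rw [Finset.sum_comm]
    refine Finset.sum_congr rfl fun z _ => ?_
    rw [muB, Finset.sum_mul]
  rw [step]
  calc (c - (1 - α) * maxWd G)
      = ∑ y ∈ h.2, (c - (1 - α) * maxWd G) / h.2.card := by
        rw [Finset.sum_const, nsmul_eq_mul]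
        field_simp
    _ ≤ ∑ y ∈ h.2, ∑ z, muOut G α h.2.card y z * f z := by
        refine Finset.sum_le_sum fun y hy => ?_
        exact int_muOut_ge G hor hα (out_edge_of_memB G hor hE hy) hm f c (hf y hy) (hfM y hy)

lemma kappaDE_upper (hor : Oriented G) (hsc : StronglyConnected G)
    {h : Finset V × Finset V} (hE : h ∈ G.E) {α : ℝ} (hα : α ∈ Set.Ico (0:ℝ) 1) :
    kappaDE G α h ≤ (1 - α) * (2 * maxWd G) / Ldi G h := by
  classical
  have hL : 0 < Ldi G h := Ldi_pos G hor hE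
  set L := Ldi G h with hLdef
  set M := maxWd G with hM
  have hM0 : 0 ≤ M := maxWd_nonneg G
  have hAne := G.nonempA h hE
  set f : V → ℝ := fun z => (h.1.image (fun x => ddist G x z)).min' (hAne.image _) with hf
  have hmin_mem : ∀ z, ∃ x ∈ h.1, f z = ddist G x z := by
    intro z
    obtain ⟨x, hx, hxe⟩ := Finset.mem_image.1 (Finset.min'_mem (h.1.image fun x => ddist G x z)
      (hAne.image _))
    exact ⟨x, hx, hxe.symm⟩
  have hmin_le : ∀ z, ∀ x ∈ h.1, f z ≤ ddist G x z := by
    intro z x hx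
    exact Finset.min'_le _ _ (Finset.mem_image_of_mem _ hx)
  have hf0 : ∀ z, 0 ≤ f z := by
    intro z
    obtain ⟨x, hx, hxe⟩ := hmin_mem z
    rw [hxe]
    exact ddist_nonneg' G x z
  have hlip : ∀ a b, f b - f a ≤ ddist G a b := by
    intro a b
    obtain ⟨x, hx, hxe⟩ := hmin_mem a
    have h1 : f b ≤ ddist G x b := hmin_le b x hx
    have h2 := ddist_triangle G hsc x a b
    rw [hxe]
    linarith
  have hlow : L - 2 * (1 - α) * M ≤ Wd (ddist G) (muA G α h) (muB G α h) := by
    have hex : ∃ π, IsCoupling (muA G α h) (muB G α h) π :=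
      ⟨_, prod_coupling (muA_nonneg G hα.1 hα.2.le h) (muB_nonneg G hα.1 hα.2.le h)
        (muA_mass G hor α hE) (muB_mass G hor α hE)⟩
    have hdual := wd_ge_dual (d := ddist G) (ddist_nonneg' G) f hlip hex
    have hup : ∑ z, muA G α h z * f z ≤ (1 - α) * M := by
      refine int_muA_le G hor hα hE f ?_ ?_
      · intro x hx
        refine le_antisymm ?_ (hf0 x)
        have := hmin_le x x hx
        rwa [ddist_self] at this
      · intro x hx z hz
        exact (hmin_le z x hx).trans (ddist_le_maxWd_of_gammaIn G hor hz).1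
    have hdown : L - (1 - α) * M ≤ ∑ z, muB G α h z * f z := by
      refine int_muB_ge G hor hα hE f L ?_ ?_
      · intro y hy
        obtain ⟨x, hx, hxe⟩ := hmin_mem y
        rw [hxe]
        exact Ldi_le G hx hy
      · intro y hy z hz
        obtain ⟨x, hx, hxe⟩ := hmin_mem z
        have h1 : L ≤ ddist G x y := Ldi_le G hx hy
        have h2 := ddist_triangle G hsc x z y
        have h3 := (ddist_le_maxWd_of_gammaOut G hor hz).2
        rw [hxe]
        linarith
    linarith
  rw [kappaDE]
  rw [show (1 - α) * (2 * M) / L = 1 - (L - 2 * (1 - α) * M) / L by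
    field_simp
    ring]
  have h2 : (L - 2 * (1 - α) * M) / L ≤ Wd (ddist G) (muA G α h) (muB G α h) / L := by
    gcongr
  linarith

end EdgeBound2
section Chain
set_option linter.unusedSectionVars false
variable {V : Type*} [Fintype V] [DecidableEq V]

/-- Edge-pair relation. -/
def EPrel (G : DHyp V) : V → V → Prop := fun a b => ∃ h ∈ G.E, a ∈ h.1 ∧ b ∈ h.2

noncomputable def dsum (G : DHyp V) : V → List V → ℝ
  | _, [] => 0
  | x, y :: l => ddist G x y + dsum G y l

noncomputable def wsum (G : DHyp V) (α : ℝ) : V → List V → ℝ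
  | _, [] => 0
  | x, y :: l => Wd (ddist G) (muInPt G α x) (muOutPt G α y) + wsum G α y l

noncomputable def Ksum (G : DHyp V) (K : V → V → ℝ) : V → List V → ℝ
  | _, [] => 0
  | x, y :: l => K x y * ddist G x y + Ksum G K y l

variable (G : DHyp V)

lemma EPrel.ne (hor : Oriented G) {a b : V} (hab : EPrel G a b) : a ≠ b := by
  obtain ⟨h, hE, h1, h2⟩ := hab
  rintro rfl
  have : a ∈ h.1 ∩ h.2 := Finset.mem_inter.2 ⟨h1, h2⟩
  rw [(hor h hE).1] at this
  simp at this

lemma EPrel.ddist_pos (hor : Oriented G) {a b : V} (hab : EPrel G a b) :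
    0 < ddist G a b := by
  obtain ⟨h, hE, h1, h2⟩ := hab
  exact (ddist_pos_of_edgepair G hE h1 h2 (hor h hE).1).1

lemma chain_decomp : ∀ γ : List (Finset V × Finset V), ∀ u v : V, IsDipath G γ u v →
    ∃ xs : List V, List.Chain (EPrel G) u (xs ++ [v])
      ∧ dsum G u (xs ++ [v]) ≤ (γ.map G.w).sum := by
  intro γ
  induction γ with
  | nil => intro u v hdp; exact absurd rfl hdp.1
  | cons h t ih =>
    intro u v hdp
    obtain ⟨-, hmem, hhd, hlt, hch⟩ := hdp
    have hE : h ∈ G.E := hmem h (by simp)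
    have hu1 : u ∈ h.1 := hhd h rfl
    rcases List.eq_nil_or_concat t with rfl | htne'
    · have hv2 : v ∈ h.2 := hlt h rfl
      refine ⟨[], List.Chain.cons ⟨h, hE, hu1, hv2⟩ (List.isChain_singleton _), ?_⟩
      show ddist G u v + 0 ≤ G.w h + 0
      simpa using ddist_le_w_of_edgepair G hE hu1 hv2
    · have htne : t ≠ [] := by
        obtain ⟨L, b, rfl⟩ := htne'
        simp
      obtain ⟨h2, hh2⟩ := Option.isSome_iff_exists.1 (List.isSome_head?.2 htne)
      have hlink : (h.2 ∩ h2.1).Nonempty := (List.isChain_cons.1 hch).1 h2 hh2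
      obtain ⟨y, hy⟩ := hlink
      have hy1 : y ∈ h.2 := (Finset.mem_inter.1 hy).1
      have hy2 : y ∈ h2.1 := (Finset.mem_inter.1 hy).2
      have hdpt : IsDipath G t y v := by
        refine ⟨htne, fun x hx => hmem x (by simp [hx]), ?_, ?_, (List.isChain_cons.1 hch).2⟩
        · intro h0 hh0
          rw [hh2] at hh0
          cases hh0
          exact hy2
        · intro hl hhl
          apply hlt
          rw [gl_cons htne]
          exact hhl
      obtain ⟨xs', hc', hd'⟩ := ih y v hdpt
      refine ⟨y :: xs', ?_, ?_⟩
      · exact List.Chain.cons ⟨h, hE, hu1, hy1⟩ hc'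
      · show ddist G u y + dsum G y (xs' ++ [v]) ≤ G.w h + (t.map G.w).sum
        have := ddist_le_w_of_edgepair G hE hu1 hy1
        linarith

lemma dsum_ge (hsc : StronglyConnected G) :
    ∀ l : List V, l ≠ [] → ∀ u v : V, l.getLast? = some v → ddist G u v ≤ dsum G u l := by
  intro l
  induction l with
  | nil => intro h; exact absurd rfl h
  | cons y l' ih =>
    intro _ u v hlast
    rcases List.eq_nil_or_concat l' with rfl | hl'ne'
    · simp only [List.getLast?_singleton, Option.some.injEq] at hlast
      subst hlast
      simp [dsum]
    · have hl'ne : l' ≠ [] := by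
        obtain ⟨L, b, rfl⟩ := hl'ne'
        simp
      have hlast' : l'.getLast? = some v := by rwa [gl_cons hl'ne] at hlast
      have h1 := ih hl'ne y v hlast'
      have h2 := ddist_triangle G hsc u y v
      show ddist G u v ≤ ddist G u y + dsum G y l'
      linarith

lemma chain_last_out (hor : Oriented G) :
    ∀ l : List V, ∀ u v : V, List.Chain (EPrel G) u l → l.getLast? = some v →
      ∃ h' ∈ G.E, v ∈ h'.1 := by
  intro l
  induction l with
  | nil => intro u v _ h; simp at h
  | cons y l' ih =>
    intro u v hch hlast
    rcases List.eq_nil_or_concat l' with rfl | hl'ne'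
    · simp only [List.getLast?_singleton, Option.some.injEq] at hlast
      subst hlast
      obtain ⟨h, hE, -, h2⟩ := (List.chain_cons.1 hch).1
      exact out_edge_of_memB G hor hE h2
    · have hl'ne : l' ≠ [] := by obtain ⟨L, b, rfl⟩ := hl'ne'; simp
      have hlast' : l'.getLast? = some v := by rwa [gl_cons hl'ne] at hlast
      exact ih y v (List.chain_cons.1 hch).2 hlast'

lemma chain_wsum (hor : Oriented G) (hsc : StronglyConnected G) {α : ℝ}
    (hα : α ∈ Set.Ico (0:ℝ) 1) :
    ∀ l : List V, l ≠ [] → ∀ u v : V, List.Chain (EPrel G) u l → l.getLast? = some v →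
      (∃ h ∈ G.E, u ∈ h.2) →
      Wd (ddist G) (muInPt G α u) (muOutPt G α v) ≤ wsum G α u l := by
  intro l
  induction l with
  | nil => intro h; exact absurd rfl h
  | cons y l' ih =>
    intro _ u v hch hlast huin
    obtain ⟨hEPuy, hch'⟩ := List.chain_cons.1 hch
    obtain ⟨h, hE, hu1, hy2⟩ := hEPuy
    rcases List.eq_nil_or_concat l' with rfl | hl'ne'
    · simp only [List.getLast?_singleton, Option.some.injEq] at hlast
      subst hlast
      simp [wsum]
    · have hl'ne : l' ≠ [] := by obtain ⟨L, b, rfl⟩ := hl'ne'; simp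
      have hlast' : l'.getLast? = some v := by rwa [gl_cons hl'ne] at hlast
      have hyin : ∃ h' ∈ G.E, y ∈ h'.2 := ⟨h, hE, hy2⟩
      have hyout : ∃ h' ∈ G.E, y ∈ h'.1 := by
        obtain ⟨h2, hh2⟩ := Option.isSome_iff_exists.1 (List.isSome_head?.2 hl'ne)
        have : EPrel G y h2 := by
          rcases l' with _ | ⟨z, l''⟩
          · exact absurd rfl hl'ne
          · cases hh2
            exact (List.chain_cons.1 hch').1
        obtain ⟨h', hE', hy1, -⟩ := this
        exact ⟨h', hE', hy1⟩
      have hvout : ∃ h' ∈ G.E, v ∈ h'.1 := chain_last_out G hor l' y v hch' hlast'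
      have ih' := ih hl'ne y v hch' hlast' hyin
      have htri : Wd (ddist G) (muInPt G α u) (muOutPt G α v)
          ≤ Wd (ddist G) (muInPt G α u) (muOutPt G α y)
            + Wd (ddist G) (muOutPt G α y) (muOutPt G α v) := by
        refine wd_triangle (ddist_nonneg' G) (fun a b c => ddist_triangle G hsc a b c) ?_ ?_
        · exact pt_coupling_exists G hor hα huin hyout
        · rw [← muInPt_eq_muOutPt G hor α y]
          exact pt_coupling_exists G hor hα hyin hvout
      rw [muInPt_eq_muOutPt G hor α y] at ih'
      show Wd (ddist G) (muInPt G α u) (muOutPt G α v)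
        ≤ Wd (ddist G) (muInPt G α u) (muOutPt G α y) + wsum G α y l'
      linarith

lemma wd_eq_kappaDV {α : ℝ} {x y : V} (hd : ddist G x y ≠ 0) :
    Wd (ddist G) (muInPt G α x) (muOutPt G α y)
      = (1 - kappaDV G α x y) * ddist G x y := by
  rw [kappaDV]
  field_simp
  ring

lemma Ksum_ge_dsum (hor : Oriented G) (K : V → V → ℝ) {κ : ℝ}
    (hedge : ∀ h ∈ G.E, ∀ u ∈ h.1, ∀ v ∈ h.2, κ ≤ K u v) :
    ∀ l : List V, ∀ u : V, List.Chain (EPrel G) u l → κ * dsum G u l ≤ Ksum G K u l := by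
  intro l
  induction l with
  | nil => intro u _; show κ * 0 ≤ 0; simp
  | cons y l' ih =>
    intro u hch
    obtain ⟨hEPuy, hch'⟩ := List.chain_cons.1 hch
    obtain ⟨h, hE, hu1, hy2⟩ := hEPuy
    have h1 : κ ≤ K u y := hedge h hE u hu1 y hy2
    have h2 : 0 ≤ ddist G u y := ddist_nonneg' G u y
    have h3 := ih y hch'
    show κ * (ddist G u y + dsum G y l') ≤ K u y * ddist G u y + Ksum G K y l'
    nlinarith

end Chain
section Limits
set_option linter.unusedSectionVars false
variable {V : Type*} [Fintype V] [DecidableEq V] (G : DHyp V)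

lemma lf_neBot : (nhdsWithin (1:ℝ) (Set.Ico (0:ℝ) 1)).NeBot := by
  apply mem_closure_iff_nhdsWithin_neBot.mp
  rw [closure_Ico (by norm_num : (0:ℝ) ≠ 1)]
  exact ⟨by norm_num, le_refl 1⟩

lemma chain_tendsto (hor : Oriented G) (K : V → V → ℝ)
    (hK : ∀ u v : V, u ≠ v →
      Tendsto (fun α => kappaDV G α u v / (1 - α)) (nhdsWithin 1 (Set.Ico (0:ℝ) 1))
        (nhds (K u v))) :
    ∀ l : List V, ∀ u : V, List.Chain (EPrel G) u l →
      Tendsto (fun α => (dsum G u l - wsum G α u l) / (1 - α))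
        (nhdsWithin 1 (Set.Ico (0:ℝ) 1)) (nhds (Ksum G K u l)) := by
  intro l
  induction l with
  | nil =>
    intro u _
    have heq : (fun α : ℝ => (dsum G u [] - wsum G α u []) / (1 - α)) = fun _ => (0:ℝ) := by
      funext α
      show ((0:ℝ) - 0) / (1 - α) = 0
      simp
    rw [heq]
    show Tendsto _ _ (nhds (0:ℝ))
    exact tendsto_const_nhds
  | cons y l' ih =>
    intro u hch
    obtain ⟨hEPuy, hch'⟩ := List.chain_cons.1 hch
    have hne : u ≠ y := EPrel.ne G hor hEPuy
    have hd : 0 < ddist G u y := EPrel.ddist_pos G hor hEPuy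
    have heq : (fun α : ℝ => kappaDV G α u y / (1 - α) * ddist G u y
          + (dsum G y l' - wsum G α y l') / (1 - α))
        =ᶠ[nhdsWithin 1 (Set.Ico (0:ℝ) 1)]
        (fun α : ℝ => (dsum G u (y :: l') - wsum G α u (y :: l')) / (1 - α)) := by
      filter_upwards [eventually_mem_nhdsWithin] with α hα
      have h1α : (1:ℝ) - α ≠ 0 := by
        have := hα.2
        intro hc
        simp only [Set.mem_Ico] at hα
        linarith [hα.2]
      show kappaDV G α u y / (1 - α) * ddist G u y
          + (dsum G y l' - wsum G α y l') / (1 - α)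
        = (ddist G u y + dsum G y l'
            - (Wd (ddist G) (muInPt G α u) (muOutPt G α y) + wsum G α y l')) / (1 - α)
      rw [wd_eq_kappaDV G hd.ne', kappaDV]
      field_simp
      ring
    refine Tendsto.congr' heq ?_
    have hlim := ((hK u y hne).mul_const (ddist G u y)).add (ih y hch')
    exact hlim

lemma K_lower (hor : Oriented G) (hsc : StronglyConnected G) (K : V → V → ℝ)
    (hK : ∀ u v : V, u ≠ v →
      Tendsto (fun α => kappaDV G α u v / (1 - α)) (nhdsWithin 1 (Set.Ico (0:ℝ) 1))
        (nhds (K u v))) {κ : ℝ}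
    (hedge : ∀ h ∈ G.E, ∀ u ∈ h.1, ∀ v ∈ h.2, κ ≤ K u v)
    {u v : V} (huv : u ≠ v) : κ ≤ K u v := by
  haveI := lf_neBot
  obtain ⟨γ, hγ, hγsum⟩ := ddist_exists_path G huv (hsc u v huv)
  obtain ⟨xs, hchain, hdle⟩ := chain_decomp G γ u v hγ
  set l := xs ++ [v] with hl
  have hlast : l.getLast? = some v := List.getLast?_concat
  have hlne : l ≠ [] := by simp [hl]
  have hge := dsum_ge G hsc l hlne u v hlast
  have hdeq : dsum G u l = ddist G u v := le_antisymm (by rw [← hγsum]; exact hdle) hge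
  have hd : 0 < ddist G u v := ddist_pos_of_ex G huv ⟨γ, hγ⟩
  set d := ddist G u v with hdd
  have huin : ∃ h ∈ G.E, u ∈ h.2 := exists_in_edge G hsc huv
  have hlb : (fun α : ℝ => (dsum G u l - wsum G α u l) / (1 - α) / d)
      ≤ᶠ[nhdsWithin 1 (Set.Ico (0:ℝ) 1)] (fun α => kappaDV G α u v / (1 - α)) := by
    filter_upwards [eventually_mem_nhdsWithin] with α hα
    simp only [Set.mem_Ico] at hα
    have h1α : (0:ℝ) < 1 - α := by linarith [hα.2]
    have hW := chain_wsum G hor hsc (by exact ⟨hα.1, hα.2⟩) l hlne u v hchain hlast huin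
    have hκα : (dsum G u l - wsum G α u l) / d ≤ kappaDV G α u v := by
      rw [kappaDV, ← hdd]
      have h1 : Wd (ddist G) (muInPt G α u) (muOutPt G α v) / d ≤ wsum G α u l / d := by
        gcongr
      have h2 : (dsum G u l - wsum G α u l) / d = 1 - wsum G α u l / d := by
        rw [sub_div, hdeq, div_self hd.ne']
      linarith
    rw [div_right_comm]
    exact (div_le_div_iff_of_pos_right h1α).mpr hκα
  have htd := (chain_tendsto G hor K hK l u hchain).div_const d
  have hle : Ksum G K u l / d ≤ K u v :=
    le_of_tendsto_of_tendsto htd (hK u v huv) hlb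
  have hKs := Ksum_ge_dsum G hor K hedge l u hchain
  have hfin : κ ≤ Ksum G K u l / d := by
    rw [le_div_iff₀ hd]
    calc κ * d = κ * dsum G u l := by rw [hdeq]
      _ ≤ Ksum G K u l := hKs
  exact hfin.trans hle

lemma K_upper (hor : Oriented G) (hsc : StronglyConnected G) {K : V → V → ℝ} {u v : V}
    (huv : u ≠ v)
    (hKuv : Tendsto (fun α => kappaDV G α u v / (1 - α)) (nhdsWithin 1 (Set.Ico (0:ℝ) 1))
      (nhds (K u v))) :
    K u v ≤ 2 * maxWd G / ddist G u v := by
  haveI := lf_neBot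
  refine le_of_tendsto hKuv ?_
  filter_upwards [eventually_mem_nhdsWithin] with α hα
  have hub := kappaDV_upper G hor hsc huv hα
  simp only [Set.mem_Ico] at hα
  have h1α : (0:ℝ) < 1 - α := by linarith [hα.2]
  rw [div_le_iff₀ h1α]
  rw [show (1 - α) * (2 * maxWd G) / ddist G u v
      = (1 - α) * (2 * maxWd G / ddist G u v) by rw [mul_div_assoc]] at hub
  linarith [hub]

end Limits
/-- Bonnet–Myers for oriented hypergraphs. -/
theorem stmt13 (G : DHyp V) (hor : Oriented G) (hsc : StronglyConnected G)
    (K : V → V → ℝ)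
    (hK : ∀ u v : V, u ≠ v →
      Tendsto (fun α => kappaDV G α u v / (1 - α)) (nhdsWithin 1 (Set.Ico (0:ℝ) 1))
        (nhds (K u v))) :
    (∀ h ∈ G.E, ∀ Kh : ℝ,
      Tendsto (fun α => kappaDE G α h / (1 - α)) (nhdsWithin 1 (Set.Ico (0:ℝ) 1)) (nhds Kh) →
      0 < Kh → Ldi G h ≤ 2 * maxWd G / Kh) ∧
    (∀ κ : ℝ, 0 < κ →
      (∀ h ∈ G.E, ∀ u ∈ h.1, ∀ v ∈ h.2, κ ≤ K u v) →
      diamD G ≤ 2 * maxWd G / κ) := by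
  haveI := lf_neBot
  constructor
  · intro h hE Kh ht hKh
    have hL : 0 < Ldi G h := Ldi_pos G hor hE
    have hub : Kh ≤ 2 * maxWd G / Ldi G h := by
      refine le_of_tendsto ht ?_
      filter_upwards [eventually_mem_nhdsWithin] with α hα
      have hup := kappaDE_upper G hor hsc hE hα
      simp only [Set.mem_Ico] at hα
      have h1α : (0:ℝ) < 1 - α := by linarith [hα.2]
      rw [div_le_iff₀ h1α]
      rw [show (1 - α) * (2 * maxWd G) / Ldi G h
          = (1 - α) * (2 * maxWd G / Ldi G h) by rw [mul_div_assoc]] at hup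
      linarith
    rw [le_div_iff₀ hKh]
    rw [le_div_iff₀ hL] at hub
    linarith
  · intro κ hκ hedge
    have hM0 : 0 ≤ maxWd G := maxWd_nonneg G
    have hbound : 0 ≤ 2 * maxWd G / κ := by positivity
    refine Real.sSup_le ?_ hbound
    rintro s ⟨u, v, rfl⟩
    by_cases huv : u = v
    · subst huv
      rw [ddist_self]
      exact hbound
    · have hKl : κ ≤ K u v := K_lower G hor hsc K hK hedge huv
      have hKu : K u v ≤ 2 * maxWd G / ddist G u v := K_upper G hor hsc huv (hK u v huv)
      have hd : 0 < ddist G u v := ddist_pos_of_ex G huv (hsc u v huv)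
      rw [le_div_iff₀ hd] at hKu
      rw [le_div_iff₀ hκ]
      nlinarith
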